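/- arXiv:1508.06269 — 2 statements merged into one kernel-verified Lean document; each statement's English description precedes it below -/
import Mathlib

section
/- (Sufficiency of current type.) Let g be any strategy profile in the dynamic game with conditionally independent Markovian types, and define for player i the strategy s_t^i(a_t^i | a_{1:t-1}, x_t^i) := P^g(a_t^i | a_{1:t-1}, x_t^i) (the conditional probability of a_t^i given the public history and player i's current type). Then for all t, the joint distribution of (x_t, a_t) under the profile (s^i, g^{-i}) equals that under g: P^{s^i g^{-i}}(x_t, a_t) = P^{g^i g^{-i}}(x_t, a_t). Consequently J^{i, s^i g^{-i}} = J^{i, g}, where J^{i,·} is player i's total expected reward. -/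
open scoped Classical BigOperators
set_option linter.unusedSectionVars false

noncomputable section

namespace DynGame

variable (N T : ℕ) (X A : Fin N → Type)
  [∀ i, Fintype (X i)] [∀ i, Fintype (A i)]

/-- A (behavioral) strategy profile: player `i` at time `t` sees the public action
history and its own private type history and randomizes over its actions. -/
abbrev Strat := ∀ i : Fin N, Fin T → (Fin T → ∀ j, A j) → (Fin T → X i) → A i → ℝ

/-- Probability of a full trajectory `(x_{1:T}, a_{1:T})` under the prior `Q1`,
the conditionally independent controlled Markov kernels `Qk` and the profile `g`. -/
def trajP (Q1 : ∀ i, X i → ℝ)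
    (Qk : ∀ i, Fin T → X i → (∀ j, A j) → X i → ℝ)
    (g : Strat N T X A)
    (x : Fin T → ∀ i, X i) (a : Fin T → ∀ i, A i) : ℝ :=
  (if h : 0 < T then ∏ i, Q1 i (x ⟨0, h⟩ i) else 1) *
  ∏ t : Fin T,
    ((∏ i, g i t a (fun s => x s i) (a t i)) *
     ∏ i, (if h : (t : ℕ) + 1 < T then
              Qk i ⟨(t : ℕ) + 1, h⟩ (x t i) (a t) (x ⟨(t : ℕ) + 1, h⟩ i) else 1))

/-- Causality: the strategy depends only on the strict past of public actions and the
past (including present) of the player's own types. -/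
def Causal (g : Strat N T X A) : Prop :=
  ∀ i (t : Fin T) a a' xi xi',
    (∀ s : Fin T, (s : ℕ) < (t : ℕ) → a s = a' s) →
    (∀ s : Fin T, (s : ℕ) ≤ (t : ℕ) → xi s = xi' s) →
    g i t a xi = g i t a' xi'

/-- The strategy profile is made of probability distributions. -/
def Stochastic (g : Strat N T X A) : Prop :=
  ∀ i t a xi, (∀ b, 0 ≤ g i t a xi b) ∧ (∑ b, g i t a xi b) = 1

def StochKer (Q1 : ∀ i, X i → ℝ) (Qk : ∀ i, Fin T → X i → (∀ j, A j) → X i → ℝ) : Prop :=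
  (∀ i, (∀ x, 0 ≤ Q1 i x) ∧ (∑ x, Q1 i x) = 1) ∧
  (∀ i t x a, (∀ x', 0 ≤ Qk i t x a x') ∧ (∑ x', Qk i t x a x') = 1)

variable (Q1 : ∀ i, X i → ℝ) (Qk : ∀ i, Fin T → X i → (∀ j, A j) → X i → ℝ)

/-- Marginal probability of the public action history `a_{1:t-1}`
(indices `s` with `s+1 ≤ t-1 <-> s+1 < t` in 0-based time). -/
def aMarg (g : Strat N T X A) (t : ℕ) (a : Fin T → ∀ i, A i) : ℝ :=
  ∑ x' : Fin T → ∀ i, X i, ∑ a' : Fin T → ∀ i, A i,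
    if (∀ s : Fin T, (s : ℕ) + 1 < t → a' s = a s) then trajP N T X A Q1 Qk g x' a' else 0

/-- Joint probability of `(x_{1:t}, a_{1:t-1})`. -/
def xaMarg (g : Strat N T X A) (t : ℕ) (x : Fin T → ∀ i, X i) (a : Fin T → ∀ i, A i) : ℝ :=
  ∑ x' : Fin T → ∀ i, X i, ∑ a' : Fin T → ∀ i, A i,
    if (∀ s : Fin T, (s : ℕ) + 1 < t → a' s = a s) ∧ (∀ s : Fin T, (s : ℕ) < t → x' s = x s)
    then trajP N T X A Q1 Qk g x' a' else 0

/-- Joint conditional `P^g(x_{1:t} | a_{1:t-1})`. -/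
def condJoint (g : Strat N T X A) (t : ℕ) (x : Fin T → ∀ i, X i) (a : Fin T → ∀ i, A i) : ℝ :=
  xaMarg N T X A Q1 Qk g t x a / aMarg N T X A Q1 Qk g t a

/-- Probability of `(x_{1:t}^i, a_{1:t-1})` for a single player `i`. -/
def xiMarg (g : Strat N T X A) (i : Fin N) (t : ℕ) (xi : Fin T → X i)
    (a : Fin T → ∀ i, A i) : ℝ :=
  ∑ x' : Fin T → ∀ i, X i, ∑ a' : Fin T → ∀ i, A i,
    if (∀ s : Fin T, (s : ℕ) + 1 < t → a' s = a s) ∧ (∀ s : Fin T, (s : ℕ) < t → x' s i = xi s)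
    then trajP N T X A Q1 Qk g x' a' else 0

/-- Player-`i` marginal conditional `P^g(x_{1:t}^i | a_{1:t-1})`. -/
def condI (g : Strat N T X A) (i : Fin N) (t : ℕ) (xi : Fin T → X i)
    (a : Fin T → ∀ i, A i) : ℝ :=
  xiMarg N T X A Q1 Qk g i t xi a / aMarg N T X A Q1 Qk g t a


/-- Numerator for the structured strategy: `P^g(a_{1:t-1}, x_t^i, a_t^i)`. -/
def sNum (g : Strat N T X A) (i : Fin N) (τ : Fin T)
    (a : Fin T → ∀ j, A j) (xiv : X i) (ai : A i) : ℝ :=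
  ∑ x' : Fin T → ∀ j, X j, ∑ a' : Fin T → ∀ j, A j,
    if (∀ s : Fin T, (s : ℕ) < (τ : ℕ) → a' s = a s) ∧ x' τ i = xiv ∧ a' τ i = ai
    then trajP N T X A Q1 Qk g x' a' else 0

/-- Denominator: `P^g(a_{1:t-1}, x_t^i)`. -/
def sDen (g : Strat N T X A) (i : Fin N) (τ : Fin T)
    (a : Fin T → ∀ j, A j) (xiv : X i) : ℝ :=
  ∑ x' : Fin T → ∀ j, X j, ∑ a' : Fin T → ∀ j, A j,
    if (∀ s : Fin T, (s : ℕ) < (τ : ℕ) → a' s = a s) ∧ x' τ i = xiv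
    then trajP N T X A Q1 Qk g x' a' else 0

/-- The structured strategy `s_t^i(a_t^i | a_{1:t-1}, x_t^i) := P^g(a_t^i | a_{1:t-1}, x_t^i)`,
viewed as a history-based strategy that ignores all of `x_{1:t-1}^i`. -/
def sStrat (g : Strat N T X A) (i : Fin N) :
    Fin T → (Fin T → ∀ j, A j) → (Fin T → X i) → A i → ℝ :=
  fun τ a xi ai => sNum N T X A Q1 Qk g i τ a (xi τ) ai / sDen N T X A Q1 Qk g i τ a (xi τ)

/-- Joint marginal of `(x_t, a_t)`. -/
def margXA (g : Strat N T X A) (τ : Fin T) (x : ∀ j, X j) (av : ∀ j, A j) : ℝ :=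
  ∑ x' : Fin T → ∀ j, X j, ∑ a' : Fin T → ∀ j, A j,
    if x' τ = x ∧ a' τ = av then trajP N T X A Q1 Qk g x' a' else 0

/-- Total expected reward of player `i`. -/
def Jval (g : Strat N T X A) (R : ∀ _ : Fin N, (∀ j, X j) → (∀ j, A j) → ℝ) (i : Fin N) : ℝ :=
  ∑ x' : Fin T → ∀ j, X j, ∑ a' : Fin T → ∀ j, A j,
    trajP N T X A Q1 Qk g x' a' * ∑ τ : Fin T, R i (x' τ) (a' τ)


set_option linter.unusedSectionVars false
set_option maxHeartbeats 1000000

section Toolkit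
variable {ι : Type*} [Fintype ι] [DecidableEq ι]

/-- Double counting: summing `G (update y c w)` over all `(y, w)` counts every
function `card β` times. -/
lemma sum_update_card {β : Type*} [Fintype β] (c : ι) (G : (ι → β) → ℝ) :
    ∑ w : β, ∑ y : ι → β, G (Function.update y c w)
      = (Fintype.card β : ℝ) * ∑ y : ι → β, G y := by
  classical
  have hinv : Function.Involutive
      (fun p : (ι → β) × β => ((Function.update p.1 c p.2, p.1 c) : (ι → β) × β)) := by
    rintro ⟨y, w⟩
    simp [Function.update_idem, Function.update_self, Function.update_eq_self]
  have := Equiv.sum_comp hinv.toPerm (fun p : (ι → β) × β => G p.1)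
  have h1 : ∑ p : (ι → β) × β, G (Function.update p.1 c p.2)
      = ∑ p : (ι → β) × β, G p.1 := by
    simpa [Function.Involutive.toPerm] using this
  calc ∑ w : β, ∑ y : ι → β, G (Function.update y c w)
      = ∑ p : (ι → β) × β, G (Function.update p.1 c p.2) := by
        rw [Fintype.sum_prod_type]; rw [Finset.sum_comm]
    _ = ∑ p : (ι → β) × β, G p.1 := h1
    _ = ∑ y : ι → β, ∑ _w : β, G y := by rw [Fintype.sum_prod_type]
    _ = (Fintype.card β : ℝ) * ∑ y : ι → β, G y := by
        simp [Finset.sum_const, nsmul_eq_mul, Finset.mul_sum]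

/-- Peel a coordinate against a kernel. -/
lemma peel_coord {β : Type*} [Fintype β] (c : ι) (F : (ι → β) → ℝ) (K : (ι → β) → β → ℝ)
    (hF : ∀ y w, F (Function.update y c w) = F y)
    (hK : ∀ y w b, K (Function.update y c w) b = K y b) :
    (Fintype.card β : ℝ) * ∑ y : ι → β, F y * K y (y c)
      = ∑ y : ι → β, F y * ∑ b : β, K y b := by
  have h := sum_update_card c (fun y => F y * K y (y c))
  rw [← h]
  have : ∀ w y, F (Function.update y c w) * K (Function.update y c w) ((Function.update y c w) c)
      = F y * K y w := by
    intro w y; rw [hF, Function.update_self, hK]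
  calc ∑ w : β, ∑ y : ι → β, F (Function.update y c w) * K (Function.update y c w)
        ((Function.update y c w) c)
      = ∑ w : β, ∑ y : ι → β, F y * K y w := by
        refine Finset.sum_congr rfl fun w _ => Finset.sum_congr rfl fun y _ => this w y
    _ = ∑ y : ι → β, F y * ∑ b : β, K y b := by
        rw [Finset.sum_comm]; simp [Finset.mul_sum]

/-- Collapse a constrained coordinate when the integrand does not depend on it. -/
lemma collapse_coord {β : Type*} [Fintype β] (c : ι) (F : (ι → β) → ℝ)
    (hF : ∀ y w, F (Function.update y c w) = F y) (w : β) :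
    (Fintype.card β : ℝ) * ∑ y : ι → β, (if y c = w then F y else 0)
      = ∑ y : ι → β, F y := by
  have h := sum_update_card c (fun y => if y c = w then F y else 0)
  rw [← h]
  have : ∀ w' (y : ι → β),
      (if (Function.update y c w') c = w then F (Function.update y c w') else 0)
        = if w' = w then F y else 0 := by
    intro w' y; rw [Function.update_self, hF]
  calc ∑ w' : β, ∑ y : ι → β, (if (Function.update y c w') c = w
          then F (Function.update y c w') else 0)
      = ∑ w' : β, ∑ y : ι → β, (if w' = w then F y else 0) := by
        refine Finset.sum_congr rfl fun w' _ => Finset.sum_congr rfl fun y _ => this w' y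
    _ = ∑ y : ι → β, F y := by
        rw [Finset.sum_comm]
        refine Finset.sum_congr rfl fun y _ => ?_
        simp

/-- Partition a sum over functions according to the value at a coordinate. -/
lemma partition_coord {β : Type*} [Fintype β] (c : ι) (G : (ι → β) → ℝ) :
    ∑ y : ι → β, G y = ∑ w : β, ∑ y : ι → β, (if y c = w then G y else 0) := by
  rw [Finset.sum_comm]
  refine Finset.sum_congr rfl fun y _ => ?_
  simp

/-- Sum over a pi type of a product of per-coordinate kernels. -/
lemma sum_prod_pi {γ : ι → Type*} [∀ i, Fintype (γ i)] (k : ∀ i, γ i → ℝ) :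
    ∑ y : ∀ i, γ i, ∏ i, k i (y i) = ∏ i, ∑ w : γ i, k i w := by
  rw [Finset.prod_univ_sum]
  rw [Fintype.piFinset_univ]

/-- If `H` is invariant under updates at each coordinate in `D`, then `H` agrees on
functions that agree off `D`. -/
lemma invariance_congr {γ : Type*} (H : (ι → γ) → ℝ) :
    ∀ (D : Finset ι), (∀ c ∈ D, ∀ y w, H (Function.update y c w) = H y) →
      ∀ y z : ι → γ, (∀ s, s ∉ D → y s = z s) → H y = H z := by
  intro D
  induction D using Finset.induction_on with
  | empty =>
    intro _ y z h
    have : y = z := funext fun s => h s (Finset.notMem_empty s)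
    rw [this]
  | @insert a D ha ih =>
    intro hH y z h
    have h1 : H y = H (Function.update y a (z a)) :=
      (hH a (Finset.mem_insert_self a D) y (z a)).symm
    rw [h1]
    refine ih (fun c hc => hH c (Finset.mem_insert_of_mem hc)) _ _ ?_
    intro s hs
    by_cases hsa : s = a
    · subst hsa; simp
    · rw [Function.update_of_ne hsa]
      exact h s (by simp [hsa, hs])

end Toolkit

section Proof

variable {n m : ℕ} {XX AA : Fin n → Type} [∀ i, Fintype (XX i)] [∀ i, Fintype (AA i)]
variable (q1 : ∀ i, XX i → ℝ) (qk : ∀ i, Fin m → XX i → (∀ j, AA j) → XX i → ℝ)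

/-- One-step transition factor for player `j` at time `t`. -/
def Qtr (j : Fin n) (t : Fin m) (xj : Fin m → XX j) (a : Fin m → ∀ j, AA j) : ℝ :=
  if h : (t : ℕ) + 1 < m then qk j ⟨(t : ℕ) + 1, h⟩ (xj t) (a t) (xj ⟨(t : ℕ) + 1, h⟩) else 1

/-- Prefix weight of player `j` up to (strictly before the actions of) time `t`. -/
def Vp (h : Strat n m XX AA) (j : Fin n) (t : ℕ) (xj : Fin m → XX j)
    (a : Fin m → ∀ j, AA j) : ℝ :=
  (if h0 : 0 < m then q1 j (xj ⟨0, h0⟩) else 1) *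
  ∏ s : Fin m, (if (s : ℕ) < t then h j s a xj (a s j) * Qtr qk j s xj a else 1)

lemma trajP_eq_prod (h : Strat n m XX AA) (x : Fin m → ∀ j, XX j) (a : Fin m → ∀ j, AA j) :
    trajP n m XX AA q1 qk h x a = ∏ j, Vp q1 qk h j m (fun s => x s j) a := by
  unfold trajP Vp
  conv_rhs => rw [Finset.prod_mul_distrib]
  congr 1
  · by_cases h0 : 0 < m <;> simp [h0]
  · conv_rhs => rw [Finset.prod_comm]
    refine Finset.prod_congr rfl fun t _ => ?_
    rw [← Finset.prod_mul_distrib]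
    refine Finset.prod_congr rfl fun j _ => ?_
    simp only [Fin.is_lt, if_true, Qtr]

lemma Vp_succ (h : Strat n m XX AA) (j : Fin n) (t : ℕ) (ht : t < m) (xj : Fin m → XX j)
    (a : Fin m → ∀ j, AA j) :
    Vp q1 qk h j (t + 1) xj a
      = Vp q1 qk h j t xj a * (h j ⟨t, ht⟩ a xj (a ⟨t, ht⟩ j) * Qtr qk j ⟨t, ht⟩ xj a) := by
  unfold Vp
  rw [mul_assoc]
  congr 1
  have key : ∀ s : Fin m, (if (s : ℕ) < t + 1 then h j s a xj (a s j) * Qtr qk j s xj a else 1)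
      = (if (s : ℕ) < t then h j s a xj (a s j) * Qtr qk j s xj a else 1) *
        (if s = ⟨t, ht⟩ then h j s a xj (a s j) * Qtr qk j s xj a else 1) := by
    intro s
    rcases lt_trichotomy (s : ℕ) t with hs | hs | hs
    · have hs1 : (s : ℕ) < t + 1 := by omega
      have hne : s ≠ ⟨t, ht⟩ := by
        intro hh; rw [hh] at hs; simp at hs <;> omega
      simp [hs, hs1, hne]
    · have hseq : s = ⟨t, ht⟩ := by
        apply Fin.ext; simpa using hs
      simp [hseq, hs]
    · have hs1 : ¬ (s : ℕ) < t + 1 := by omega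
      have hs2 : ¬ (s : ℕ) < t := by omega
      have hne : s ≠ ⟨t, ht⟩ := by
        intro hh; rw [hh] at hs; simp at hs <;> omega
      simp [hs1, hs2, hne]
  rw [Finset.prod_congr rfl fun s _ => key s, Finset.prod_mul_distrib]
  congr 1
  rw [Finset.prod_ite_eq' Finset.univ (⟨t, ht⟩ : Fin m)
    (fun s => h j s a xj (a s j) * Qtr qk j s xj a)]
  simp

lemma Vp_congr (h : Strat n m XX AA) (hch : Causal n m XX AA h) (j : Fin n) (t : ℕ)
    {xj xj' : Fin m → XX j} {a a' : Fin m → ∀ j, AA j}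
    (hx : ∀ s : Fin m, (s : ℕ) ≤ t → xj s = xj' s)
    (ha : ∀ s : Fin m, (s : ℕ) < t → a s = a' s) :
    Vp q1 qk h j t xj a = Vp q1 qk h j t xj' a' := by
  unfold Vp
  congr 1
  · by_cases h0 : 0 < m
    · simp only [dif_pos h0]; rw [hx ⟨0, h0⟩ (Nat.zero_le t)]
    · simp [h0]
  · refine Finset.prod_congr rfl fun s _ => ?_
    by_cases hst : (s : ℕ) < t
    · simp only [if_pos hst]
      have e1 : h j s a xj (a s j) = h j s a' xj' (a' s j) := by
        rw [hch j s a a' xj xj' (fun u hu => ha u (by omega)) (fun u hu => hx u (by omega))]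
        rw [ha s hst]
      have e2 : Qtr qk j s xj a = Qtr qk j s xj' a' := by
        unfold Qtr
        by_cases hs1 : (s : ℕ) + 1 < m
        · simp only [dif_pos hs1]
          rw [hx s (by omega), ha s hst, hx ⟨(s : ℕ) + 1, hs1⟩ (by simp; omega)]
        · simp [hs1]
      rw [e1, e2]
    · simp [hst]

lemma Vp_update_a (h : Strat n m XX AA) (hch : Causal n m XX AA h) (j : Fin n) (t : ℕ)
    (xj : Fin m → XX j) (a : Fin m → ∀ j, AA j) (c : Fin m) (hc : t ≤ (c : ℕ)) (w : ∀ j, AA j) :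
    Vp q1 qk h j t xj (Function.update a c w) = Vp q1 qk h j t xj a := by
  refine Vp_congr q1 qk h hch j t (fun s _ => rfl) (fun s hs => ?_)
  rw [Function.update_of_ne]
  intro hsc; rw [hsc] at hs; omega

lemma Vp_update_x (h : Strat n m XX AA) (hch : Causal n m XX AA h) (j : Fin n) (t : ℕ)
    (xj : Fin m → XX j) (a : Fin m → ∀ j, AA j) (c : Fin m) (hc : t < (c : ℕ)) (w : XX j) :
    Vp q1 qk h j t (Function.update xj c w) a = Vp q1 qk h j t xj a := by
  refine Vp_congr q1 qk h hch j t (fun s hs => ?_) (fun s _ => rfl)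
  rw [Function.update_of_ne]
  intro hsc; rw [hsc] at hs; omega

lemma update_proj (x : Fin m → ∀ j, XX j) (c : Fin m) (w : ∀ j, XX j) (j : Fin n) :
    (fun s => Function.update x c w s j) = Function.update (fun s => x s j) c (w j) := by
  funext s
  by_cases hsc : s = c
  · subst hsc; simp
  · rw [Function.update_of_ne hsc, Function.update_of_ne hsc]

lemma Qtr_nonneg (hk : StochKer n m XX AA q1 qk) (j : Fin n) (t : Fin m) (xj : Fin m → XX j)
    (a : Fin m → ∀ j, AA j) : 0 ≤ Qtr qk j t xj a := by
  unfold Qtr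
  by_cases h1 : (t : ℕ) + 1 < m
  · simp only [dif_pos h1]; exact (hk.2 j _ _ _).1 _
  · simp [h1]

lemma Vp_nonneg (h : Strat n m XX AA)
    (hpos : ∀ j (t : Fin m) a xj b, 0 ≤ h j t a xj b) (hk : StochKer n m XX AA q1 qk)
    (j : Fin n) (t : ℕ) (xj : Fin m → XX j) (a : Fin m → ∀ j, AA j) :
    0 ≤ Vp q1 qk h j t xj a := by
  unfold Vp
  refine mul_nonneg ?_ (Finset.prod_nonneg fun s _ => ?_)
  · by_cases h0 : 0 < m
    · simp only [dif_pos h0]; exact (hk.1 j).1 _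
    · simp [h0]
  · by_cases hst : (s : ℕ) < t
    · simp only [if_pos hst]
      exact mul_nonneg (hpos _ _ _ _ _) (Qtr_nonneg q1 qk hk j s xj a)
    · simp [hst]

lemma trajP_nonneg (h : Strat n m XX AA)
    (hpos : ∀ j (t : Fin m) a xj b, 0 ≤ h j t a xj b) (hk : StochKer n m XX AA q1 qk)
    (x : Fin m → ∀ j, XX j) (a : Fin m → ∀ j, AA j) :
    0 ≤ trajP n m XX AA q1 qk h x a := by
  rw [trajP_eq_prod]
  exact Finset.prod_nonneg fun j _ => Vp_nonneg q1 qk h hpos hk j m _ a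

/-- Product of cardinalities. -/
def cardProd (Y : Fin n → Type) [∀ i, Fintype (Y i)] : ℝ := ∏ j, (Fintype.card (Y j) : ℝ)

/-- Sum over trajectories, restricted by `C`, of the prefix weights up to and including
the actions at time `u`. -/
def GG (h : Strat n m XX AA)
    (C : (Fin m → ∀ j, XX j) → (Fin m → ∀ j, AA j) → Prop) (u : Fin m) : ℝ :=
  ∑ x' : Fin m → ∀ j, XX j, ∑ a' : Fin m → ∀ j, AA j,
    if C x' a' then (∏ j, Vp q1 qk h j (u : ℕ) (fun s => x' s j) a') *
      ∏ j, h j u a' (fun s => x' s j) (a' u j) else 0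

lemma GG_step (h : Strat n m XX AA) (hch : Causal n m XX AA h)
    (hk : StochKer n m XX AA q1 qk)
    (C : (Fin m → ∀ j, XX j) → (Fin m → ∀ j, AA j) → Prop) (τ u u' : Fin m)
    (htu : (τ : ℕ) ≤ (u : ℕ)) (huu' : (u' : ℕ) = (u : ℕ) + 1)
    (hCx : ∀ x a (c : Fin m) w, (τ : ℕ) < (c : ℕ) → (C (Function.update x c w) a ↔ C x a))
    (hCa : ∀ x a (c : Fin m) w, (τ : ℕ) < (c : ℕ) → (C x (Function.update a c w) ↔ C x a))
    (hdef : ∑ x' : Fin m → ∀ j, XX j, ∑ a' : Fin m → ∀ j, AA j,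
      (if C x' a' then (∏ j, Vp q1 qk h j (u' : ℕ) (fun s => x' s j) a') *
        (1 - ∑ b : ∀ j, AA j, ∏ j, h j u' a' (fun s => x' s j) (b j)) else 0) = 0) :
    GG q1 qk h C u = cardProd XX * cardProd AA * GG q1 qk h C u' := by
  have hτu' : (τ : ℕ) < (u' : ℕ) := by omega
  -- Step A : peel the actions at time u'
  have hstepA : ∀ x' : Fin m → ∀ j, XX j,
      (cardProd AA) * ∑ a' : Fin m → ∀ j, AA j,
          (if C x' a' then (∏ j, Vp q1 qk h j (u' : ℕ) (fun s => x' s j) a') *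
            ∏ j, h j u' a' (fun s => x' s j) (a' u' j) else 0)
        = ∑ a' : Fin m → ∀ j, AA j,
            ((if C x' a' then (∏ j, Vp q1 qk h j (u' : ℕ) (fun s => x' s j) a') else 0) *
              ∑ b : ∀ j, AA j, ∏ j, h j u' a' (fun s => x' s j) (b j)) := by
    intro x'
    have hpc := peel_coord (c := u')
      (F := fun a' => if C x' a' then (∏ j, Vp q1 qk h j (u' : ℕ) (fun s => x' s j) a') else 0)
      (K := fun a' b => ∏ j, h j u' a' (fun s => x' s j) (b j))
      (hF := ?_) (hK := ?_)
    · rw [← hpc]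
      have hcA : (Fintype.card (∀ j, AA j) : ℝ) = cardProd AA := by
        rw [Fintype.card_pi]; unfold cardProd; push_cast; rfl
      rw [hcA]
      congr 1
      refine Finset.sum_congr rfl fun a' _ => ?_
      by_cases hC : C x' a' <;> simp [hC]
    · intro y w
      refine if_congr (hCa x' y u' w hτu') ?_ rfl
      refine Finset.prod_congr rfl fun j _ => ?_
      exact Vp_update_a q1 qk h hch j _ _ y u' (le_refl _) w
    · intro y w b
      refine Finset.prod_congr rfl fun j _ => ?_
      refine congrFun (hch j u' _ _ _ _ (fun s hs => ?_) (fun _ _ => rfl)) (b j)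
      rw [Function.update_of_ne]
      intro hsc; rw [hsc] at hs; omega
  -- rewrite the right side of step A using hdef
  have hS1 : cardProd AA * GG q1 qk h C u'
      = ∑ x' : Fin m → ∀ j, XX j, ∑ a' : Fin m → ∀ j, AA j,
          (if C x' a' then (∏ j, Vp q1 qk h j (u' : ℕ) (fun s => x' s j) a') else 0) := by
    unfold GG
    rw [Finset.mul_sum]
    have : ∀ x', ∑ a' : Fin m → ∀ j, AA j,
        ((if C x' a' then (∏ j, Vp q1 qk h j (u' : ℕ) (fun s => x' s j) a') else 0) *
          ∑ b : ∀ j, AA j, ∏ j, h j u' a' (fun s => x' s j) (b j))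
        = (∑ a' : Fin m → ∀ j, AA j,
            (if C x' a' then (∏ j, Vp q1 qk h j (u' : ℕ) (fun s => x' s j) a') else 0))
          - ∑ a' : Fin m → ∀ j, AA j,
              (if C x' a' then (∏ j, Vp q1 qk h j (u' : ℕ) (fun s => x' s j) a') *
                (1 - ∑ b : ∀ j, AA j, ∏ j, h j u' a' (fun s => x' s j) (b j)) else 0) := by
      intro x'
      rw [← Finset.sum_sub_distrib]
      refine Finset.sum_congr rfl fun a' _ => ?_
      by_cases hC : C x' a' <;> simp [hC] <;> ring
    calc ∑ x', cardProd AA * ∑ a' : Fin m → ∀ j, AA j,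
            (if C x' a' then (∏ j, Vp q1 qk h j (u' : ℕ) (fun s => x' s j) a') *
              ∏ j, h j u' a' (fun s => x' s j) (a' u' j) else 0)
        = ∑ x', (∑ a' : Fin m → ∀ j, AA j,
            ((if C x' a' then (∏ j, Vp q1 qk h j (u' : ℕ) (fun s => x' s j) a') else 0) *
              ∑ b : ∀ j, AA j, ∏ j, h j u' a' (fun s => x' s j) (b j))) :=
          Finset.sum_congr rfl fun x' _ => hstepA x'
      _ = (∑ x', ∑ a' : Fin m → ∀ j, AA j,
            (if C x' a' then (∏ j, Vp q1 qk h j (u' : ℕ) (fun s => x' s j) a') else 0))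
          - ∑ x', ∑ a' : Fin m → ∀ j, AA j,
              (if C x' a' then (∏ j, Vp q1 qk h j (u' : ℕ) (fun s => x' s j) a') *
                (1 - ∑ b : ∀ j, AA j, ∏ j, h j u' a' (fun s => x' s j) (b j)) else 0) := by
          rw [← Finset.sum_sub_distrib]
          exact Finset.sum_congr rfl fun x' _ => this x'
      _ = _ := by rw [hdef]; ring
  -- Step B : peel the states at time u'
  have hm1 : (u : ℕ) + 1 < m := by rw [← huu']; exact u'.isLt
  have hu'            : (⟨(u : ℕ) + 1, hm1⟩ : Fin m) = u' := by apply Fin.ext; simp [huu']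
  have hstepB : ∀ a' : Fin m → ∀ j, AA j,
      (cardProd XX) * ∑ x' : Fin m → ∀ j, XX j,
          (if C x' a' then (∏ j, Vp q1 qk h j (u' : ℕ) (fun s => x' s j) a') else 0)
        = ∑ x' : Fin m → ∀ j, XX j,
            (if C x' a' then (∏ j, Vp q1 qk h j (u : ℕ) (fun s => x' s j) a' *
              h j u a' (fun s => x' s j) (a' u j)) else 0) := by
    intro a'
    have hpc := peel_coord (c := u')
      (F := fun x' => if C x' a' then (∏ j, Vp q1 qk h j (u : ℕ) (fun s => x' s j) a' *
        h j u a' (fun s => x' s j) (a' u j)) else 0)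
      (K := fun x' w => ∏ j, qk j u' (x' u j) (a' u) (w j))
      (hF := ?_) (hK := ?_)
    · have hcX : (Fintype.card (∀ j, XX j) : ℝ) = cardProd XX := by
        rw [Fintype.card_pi]; unfold cardProd; rw [Nat.cast_prod]
      have hrw : ∀ x' : Fin m → ∀ j, XX j,
          (if C x' a' then (∏ j, Vp q1 qk h j (u' : ℕ) (fun s => x' s j) a') else 0)
          = (if C x' a' then (∏ j, Vp q1 qk h j (u : ℕ) (fun s => x' s j) a' *
              h j u a' (fun s => x' s j) (a' u j)) else 0) * (∏ j, qk j u' (x' u j) (a' u) (x' u' j)) := by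
        intro x'
        by_cases hC : C x' a'
        · simp only [if_pos hC]
          rw [← Finset.prod_mul_distrib]
          refine Finset.prod_congr rfl fun j _ => ?_
          have : Vp q1 qk h j (u' : ℕ) (fun s => x' s j) a'
              = Vp q1 qk h j (u : ℕ) (fun s => x' s j) a' *
                (h j u a' (fun s => x' s j) (a' u j) * Qtr qk j u (fun s => x' s j) a') := by
            rw [huu']
            have := Vp_succ q1 qk h j (u : ℕ) u.isLt (fun s => x' s j) a'
            simpa using this
          rw [this]
          have hQtr : Qtr qk j u (fun s => x' s j) a' = qk j u' (x' u j) (a' u) (x' u' j) := by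
            unfold Qtr
            rw [dif_pos hm1, hu']
          rw [hQtr]; ring
        · simp [hC]
      rw [Finset.sum_congr rfl fun x' _ => hrw x', ← hcX, hpc]
      refine Finset.sum_congr rfl fun x' _ => ?_
      have hsum1 : (∑ w : ∀ j, XX j, ∏ j, qk j u' (x' u j) (a' u) (w j)) = 1 := by
        rw [sum_prod_pi (k := fun j w => qk j u' (x' u j) (a' u) w)]
        rw [Finset.prod_congr rfl fun j _ => (hk.2 j u' (x' u j) (a' u)).2]
        simp
      rw [hsum1, mul_one]
    · intro y w
      refine if_congr (hCx y a' u' w hτu') ?_ rfl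
      refine Finset.prod_congr rfl fun j _ => ?_
      rw [update_proj y u' w j]
      congr 1
      · exact Vp_update_x q1 qk h hch j _ _ a' u' (by omega) (w j)
      · refine congrFun (hch j u a' a' _ _ (fun _ _ => rfl) (fun s hs => ?_)) _
        rw [Function.update_of_ne]
        intro hsc; rw [hsc] at hs; omega
    · intro y w b
      refine Finset.prod_congr rfl fun j _ => ?_
      rw [Function.update_of_ne]
      intro hsc
      have : (u : ℕ) = (u' : ℕ) := by rw [hsc]
      omega
  -- combine
  have hL : GG q1 qk h C u = ∑ a' : Fin m → ∀ j, AA j, ∑ x' : Fin m → ∀ j, XX j,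
      (if C x' a' then (∏ j, Vp q1 qk h j (u : ℕ) (fun s => x' s j) a') *
        ∏ j, h j u a' (fun s => x' s j) (a' u j) else 0) := by
    unfold GG; exact Finset.sum_comm
  have h2 : ∀ a' : Fin m → ∀ j, AA j,
      (∑ x' : Fin m → ∀ j, XX j, (if C x' a' then
          (∏ j, Vp q1 qk h j (u : ℕ) (fun s => x' s j) a') *
            ∏ j, h j u a' (fun s => x' s j) (a' u j) else 0))
        = cardProd XX * ∑ x' : Fin m → ∀ j, XX j,
            (if C x' a' then (∏ j, Vp q1 qk h j (u' : ℕ) (fun s => x' s j) a') else 0) := by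
    intro a'
    rw [hstepB a']
    refine Finset.sum_congr rfl fun x' _ => ?_
    by_cases hC : C x' a' <;> simp [hC, Finset.prod_mul_distrib]
  rw [hL, Finset.sum_congr rfl fun a' _ => h2 a', ← Finset.mul_sum, mul_assoc]
  congr 1
  exact Finset.sum_comm.trans hS1.symm

lemma GG_last (h : Strat n m XX AA) (hm : 0 < m)
    (C : (Fin m → ∀ j, XX j) → (Fin m → ∀ j, AA j) → Prop) :
    GG q1 qk h C ⟨m - 1, by omega⟩
      = ∑ x' : Fin m → ∀ j, XX j, ∑ a' : Fin m → ∀ j, AA j,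
          (if C x' a' then trajP n m XX AA q1 qk h x' a' else 0) := by
  unfold GG
  refine Finset.sum_congr rfl fun x' _ => Finset.sum_congr rfl fun a' _ => ?_
  by_cases hC : C x' a'
  · simp only [if_pos hC]
    rw [trajP_eq_prod]
    rw [← Finset.prod_mul_distrib]
    refine Finset.prod_congr rfl fun j _ => ?_
    have hm1 : m - 1 + 1 = m := Nat.succ_pred_eq_of_pos hm
    have hlt : m - 1 < m := by omega
    have hV := Vp_succ q1 qk h j (m - 1) hlt (fun s => x' s j) a'
    rw [hm1] at hV
    rw [hV]
    have hQtr : Qtr qk j ⟨m - 1, hlt⟩ (fun s => x' s j) a' = 1 := by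
      unfold Qtr
      rw [dif_neg (show ¬((m - 1) + 1 < m) by omega)]
    simp [hQtr]
  · simp [hC]

lemma GG_peel (h : Strat n m XX AA) (hch : Causal n m XX AA h)
    (hk : StochKer n m XX AA q1 qk) (τ : Fin m)
    (C : (Fin m → ∀ j, XX j) → (Fin m → ∀ j, AA j) → Prop)
    (hCx : ∀ x a (c : Fin m) w, (τ : ℕ) < (c : ℕ) → (C (Function.update x c w) a ↔ C x a))
    (hCa : ∀ x a (c : Fin m) w, (τ : ℕ) < (c : ℕ) → (C x (Function.update a c w) ↔ C x a))
    (hdef : ∀ u' : Fin m, (τ : ℕ) < (u' : ℕ) →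
      ∑ x' : Fin m → ∀ j, XX j, ∑ a' : Fin m → ∀ j, AA j,
        (if C x' a' then (∏ j, Vp q1 qk h j (u' : ℕ) (fun s => x' s j) a') *
          (1 - ∑ b : ∀ j, AA j, ∏ j, h j u' a' (fun s => x' s j) (b j)) else 0) = 0) :
    GG q1 qk h C τ = (cardProd XX * cardProd AA) ^ (m - 1 - (τ : ℕ)) *
      ∑ x' : Fin m → ∀ j, XX j, ∑ a' : Fin m → ∀ j, AA j,
        (if C x' a' then trajP n m XX AA q1 qk h x' a' else 0) := by
  have hm : 0 < m := lt_of_le_of_lt (Nat.zero_le _) τ.isLt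
  have haux : ∀ (k : ℕ) (u : Fin m), (τ : ℕ) ≤ (u : ℕ) → (u : ℕ) + k = m - 1 →
      GG q1 qk h C u = (cardProd XX * cardProd AA) ^ k * GG q1 qk h C ⟨m - 1, by omega⟩ := by
    intro k
    induction k with
    | zero =>
      intro u hτu hum
      have : u = (⟨m - 1, by omega⟩ : Fin m) := by apply Fin.ext; simpa using hum
      rw [this]; simp
    | succ k ih =>
      intro u hτu hum
      have hm1 : (u : ℕ) + 1 < m := by omega
      set u' : Fin m := ⟨(u : ℕ) + 1, hm1⟩ with hu'def
      have h1 : GG q1 qk h C u = cardProd XX * cardProd AA * GG q1 qk h C u' :=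
        GG_step q1 qk h hch hk C τ u u' hτu rfl hCx hCa (hdef u' (by simp [hu'def]; omega))
      have h2 := ih u' (by simp [hu'def]; omega) (by simp [hu'def]; omega)
      rw [h1, h2, pow_succ]; ring
  have := haux (m - 1 - (τ : ℕ)) τ (le_refl _) (by have := τ.isLt; omega)
  rw [this, GG_last q1 qk h hm C]

/-- Multiplicity of the free action coordinates at times `≥ t`. -/
def muA (m' : ℕ) (AA' : Fin n → Type) [∀ i, Fintype (AA' i)] (t : ℕ) : ℝ :=
  ∏ s : Fin m', (if (s : ℕ) < t then 1 else ∏ j, (Fintype.card (AA' j) : ℝ))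

lemma countA (t : ℕ) (a : Fin m → ∀ j, AA j) (H : (Fin m → ∀ j, AA j) → ℝ)
    (hH : ∀ (c : Fin m), t ≤ (c : ℕ) → ∀ y w, H (Function.update y c w) = H y) :
    ∑ a' : Fin m → ∀ j, AA j, (if (∀ s : Fin m, (s : ℕ) < t → a' s = a s) then H a' else 0)
      = muA m AA t * H a := by
  have h1 : ∀ a' : Fin m → ∀ j, AA j, (∀ s : Fin m, (s : ℕ) < t → a' s = a s) → H a' = H a := by
    intro a' hP
    refine invariance_congr H (Finset.univ.filter (fun s : Fin m => t ≤ (s : ℕ)))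
      (fun c hc y w => hH c (by simpa using (Finset.mem_filter.mp hc).2) y w) a' a ?_
    intro s hs
    have hns : ¬ t ≤ (s : ℕ) := by
      intro hts
      exact hs (Finset.mem_filter.mpr ⟨Finset.mem_univ s, hts⟩)
    exact hP s (by omega)
  calc ∑ a' : Fin m → ∀ j, AA j, (if (∀ s : Fin m, (s : ℕ) < t → a' s = a s) then H a' else 0)
      = ∑ a' : Fin m → ∀ j, AA j,
          (if (∀ s : Fin m, (s : ℕ) < t → a' s = a s) then (1 : ℝ) else 0) * H a := by
        refine Finset.sum_congr rfl fun a' _ => ?_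
        by_cases hP : (∀ s : Fin m, (s : ℕ) < t → a' s = a s)
        · rw [if_pos hP, if_pos hP, one_mul, h1 a' hP]
        · simp [hP]
    _ = (∑ a' : Fin m → ∀ j, AA j,
          (if (∀ s : Fin m, (s : ℕ) < t → a' s = a s) then (1 : ℝ) else 0)) * H a := by
        rw [Finset.sum_mul]
    _ = muA m AA t * H a := by
        congr 1
        have hrew : ∀ a' : Fin m → ∀ j, AA j,
            (if (∀ s : Fin m, (s : ℕ) < t → a' s = a s) then (1 : ℝ) else 0)
              = ∏ s : Fin m, (if ((s : ℕ) < t → a' s = a s) then (1 : ℝ) else 0) := by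
          intro a'; rw [Finset.prod_boole]; simp
        rw [Finset.sum_congr rfl fun a' _ => hrew a']
        rw [sum_prod_pi (k := fun (s : Fin m) (w : ∀ j, AA j) =>
          if ((s : ℕ) < t → w = a s) then (1 : ℝ) else 0)]
        unfold muA
        refine Finset.prod_congr rfl fun s _ => ?_
        by_cases hst : (s : ℕ) < t
        · simp only [if_pos hst]
          have : ∀ w : ∀ j, AA j, (if ((s : ℕ) < t → w = a s) then (1 : ℝ) else 0)
              = if w = a s then (1 : ℝ) else 0 := by
            intro w; by_cases hw : w = a s <;> simp [hw, hst]
          rw [Finset.sum_congr rfl fun w _ => this w]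
          rw [Finset.sum_ite_eq' Finset.univ (a s) (fun _ => (1 : ℝ))]
          simp
        · simp only [if_neg hst]
          have : ∀ w : ∀ j, AA j, (if ((s : ℕ) < t → w = a s) then (1 : ℝ) else 0) = 1 := by
            intro w; rw [if_pos]; intro hlt; exact absurd hlt hst
          rw [Finset.sum_congr rfl fun w _ => this w]
          rw [Finset.sum_const, Finset.card_univ, nsmul_eq_mul, mul_one, Fintype.card_pi]
          push_cast; rfl

lemma sum_x_factor (k : ∀ j, (Fin m → XX j) → ℝ) :
    ∑ x' : Fin m → ∀ j, XX j, ∏ j, k j (fun s => x' s j)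
      = ∏ j, ∑ xj : Fin m → XX j, k j xj := by
  have e := Equiv.sum_comp (Equiv.piComm (fun (j : Fin n) (s : Fin m) => XX j))
      (fun x' : Fin m → ∀ j, XX j => ∏ j, k j (fun s => x' s j))
  rw [← e]
  have hpt : ∀ xt : ∀ j, Fin m → XX j,
      (∏ j, k j (fun s => (Equiv.piComm (fun (j : Fin n) (s : Fin m) => XX j) xt) s j))
        = ∏ j, k j (xt j) := fun xt => rfl
  rw [Finset.sum_congr rfl fun xt _ => hpt xt]
  exact sum_prod_pi k

lemma mark_self {β : Fin n → Sort*} (i : Fin n) (v w : β i) :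
    (∀ h : i = i, w = h ▸ v) ↔ w = v :=
  ⟨fun H => H rfl, fun hx _ => hx⟩

lemma mark_of_ne {β : Fin n → Sort*} {i j : Fin n} (hij : i ≠ j) (v : β i) (w : β j) :
    ∀ h : i = j, w = h ▸ v := fun h => absurd h hij

/-- Player-`j` partition function of the prefix weight. -/
def Zp (h : Strat n m XX AA) (j : Fin n) (t : ℕ) (a : Fin m → ∀ j, AA j) : ℝ :=
  ∑ xj : Fin m → XX j, Vp q1 qk h j t xj a

/-- Player-`j` partition function constrained to pass through `u` at time `t`. -/
def ZpC (h : Strat n m XX AA) (j : Fin n) (t : Fin m) (a : Fin m → ∀ j, AA j) (u : XX j) : ℝ :=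
  ∑ xj : Fin m → XX j, (if xj t = u then Vp q1 qk h j (t : ℕ) xj a else 0)

/-- The same, together with the action factor at time `t`. -/
def ZpA (h : Strat n m XX AA) (j : Fin n) (t : Fin m) (a : Fin m → ∀ j, AA j) (u : XX j)
    (b : AA j) : ℝ :=
  ∑ xj : Fin m → XX j, (if xj t = u then Vp q1 qk h j (t : ℕ) xj a * h j t a xj b else 0)

/-- Environment: product of partition functions of all players other than `i`. -/
def Emi (h : Strat n m XX AA) (i : Fin n) (t : ℕ) (a : Fin m → ∀ j, AA j) : ℝ :=
  ∏ j ∈ Finset.univ.erase i, Zp q1 qk h j t a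

lemma hdef_of_stoch (h : Strat n m XX AA) (hst : Stochastic n m XX AA h)
    (C : (Fin m → ∀ j, XX j) → (Fin m → ∀ j, AA j) → Prop) (u' : Fin m) :
    ∑ x' : Fin m → ∀ j, XX j, ∑ a' : Fin m → ∀ j, AA j,
      (if C x' a' then (∏ j, Vp q1 qk h j (u' : ℕ) (fun s => x' s j) a') *
        (1 - ∑ b : ∀ j, AA j, ∏ j, h j u' a' (fun s => x' s j) (b j)) else 0) = 0 := by
  refine Finset.sum_eq_zero fun x' _ => Finset.sum_eq_zero fun a' _ => ?_
  have hone : (∑ b : ∀ j, AA j, ∏ j, h j u' a' (fun s => x' s j) (b j)) = 1 := by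
    rw [sum_prod_pi (k := fun j b => h j u' a' (fun s => x' s j) b)]
    rw [Finset.prod_congr rfl fun j _ => (hst j u' a' (fun s => x' s j)).2]
    simp
  rw [hone]
  simp

/-- Reduction of a trajectory sum with constraints `(a_{<τ} = a, x_τ^i = v)` to
partition functions. -/
lemma den_factor (h : Strat n m XX AA) (hst : Stochastic n m XX AA h)
    (hch : Causal n m XX AA h) (hk : StochKer n m XX AA q1 qk)
    (i : Fin n) (τ : Fin m) (a : Fin m → ∀ j, AA j) (v : XX i)
    (C : (Fin m → ∀ j, XX j) → (Fin m → ∀ j, AA j) → Prop)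
    (hCiff : ∀ x' a', C x' a' ↔
      ((∀ s : Fin m, (s : ℕ) < (τ : ℕ) → a' s = a s) ∧ x' τ i = v)) :
    cardProd AA * ((cardProd XX * cardProd AA) ^ (m - 1 - (τ : ℕ)) *
        (∑ x' : Fin m → ∀ j, XX j, ∑ a' : Fin m → ∀ j, AA j,
          (if C x' a' then trajP n m XX AA q1 qk h x' a' else 0)))
      = muA m AA (τ : ℕ) * (ZpC q1 qk h i τ a v * Emi q1 qk h i (τ : ℕ) a) := by
  have hCx : ∀ x a (c : Fin m) w, (τ : ℕ) < (c : ℕ) → (C (Function.update x c w) a ↔ C x a) := by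
    intro x a c w hc
    rw [hCiff, hCiff]
    have : Function.update x c w τ i = x τ i := by
      rw [Function.update_of_ne]; intro hτc; rw [hτc] at hc; omega
    rw [this]
  have hCa : ∀ x aa (c : Fin m) w, (τ : ℕ) ≤ (c : ℕ) → (C x (Function.update aa c w) ↔ C x aa) := by
    intro x aa c w hc
    rw [hCiff, hCiff]
    constructor
    · rintro ⟨h1, h2⟩
      refine ⟨fun s hs => ?_, h2⟩
      rw [← h1 s hs, Function.update_of_ne]
      intro hsc; rw [hsc] at hs; omega
    · rintro ⟨h1, h2⟩
      refine ⟨fun s hs => ?_, h2⟩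
      rw [Function.update_of_ne, h1 s hs]
      intro hsc; rw [hsc] at hs; omega
  have hpeel := GG_peel q1 qk h hch hk τ C hCx (fun x aa c w hc => hCa x aa c w (le_of_lt hc))
    (fun u' _ => hdef_of_stoch q1 qk h hst C u')
  rw [← hpeel]
  -- peel the actions at time τ
  have hstep : ∀ x' : Fin m → ∀ j, XX j,
      cardProd AA * ∑ a' : Fin m → ∀ j, AA j,
          (if C x' a' then (∏ j, Vp q1 qk h j (τ : ℕ) (fun s => x' s j) a') *
            ∏ j, h j τ a' (fun s => x' s j) (a' τ j) else 0)
        = ∑ a' : Fin m → ∀ j, AA j,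
            (if C x' a' then (∏ j, Vp q1 qk h j (τ : ℕ) (fun s => x' s j) a') else 0) := by
    intro x'
    have hpc := peel_coord (c := τ)
      (F := fun a' => if C x' a' then (∏ j, Vp q1 qk h j (τ : ℕ) (fun s => x' s j) a') else 0)
      (K := fun a' b => ∏ j, h j τ a' (fun s => x' s j) (b j))
      (hF := ?_) (hK := ?_)
    · have hcA : (Fintype.card (∀ j, AA j) : ℝ) = cardProd AA := by
        rw [Fintype.card_pi]; unfold cardProd; push_cast; rfl
      rw [← hcA]
      have e1 : ∀ a' : Fin m → ∀ j, AA j,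
          (if C x' a' then (∏ j, Vp q1 qk h j (τ : ℕ) (fun s => x' s j) a') *
            ∏ j, h j τ a' (fun s => x' s j) (a' τ j) else 0)
          = (if C x' a' then (∏ j, Vp q1 qk h j (τ : ℕ) (fun s => x' s j) a') else 0) *
            ∏ j, h j τ a' (fun s => x' s j) (a' τ j) := by
        intro a'; by_cases hc : C x' a' <;> simp [hc]
      rw [Finset.sum_congr rfl fun a' _ => e1 a', hpc]
      refine Finset.sum_congr rfl fun a' _ => ?_
      have hone : (∑ b : ∀ j, AA j, ∏ j, h j τ a' (fun s => x' s j) (b j)) = 1 := by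
        rw [sum_prod_pi (k := fun j b => h j τ a' (fun s => x' s j) b)]
        rw [Finset.prod_congr rfl fun j _ => (hst j τ a' (fun s => x' s j)).2]
        simp
      rw [hone, mul_one]
    · intro y w
      refine if_congr (hCa x' y τ w (le_refl _)) ?_ rfl
      refine Finset.prod_congr rfl fun j _ => ?_
      exact Vp_update_a q1 qk h hch j _ _ y τ (le_refl _) w
    · intro y w b
      refine Finset.prod_congr rfl fun j _ => ?_
      refine congrFun (hch j τ _ _ _ _ (fun s hs => ?_) (fun _ _ => rfl)) (b j)
      rw [Function.update_of_ne]
      intro hsc; rw [hsc] at hs; omega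
  unfold GG
  rw [Finset.mul_sum, Finset.sum_congr rfl fun x' _ => hstep x']
  -- reorganize into an `a'`-sum with `x'`-inner sums
  have hreorg : ∑ x' : Fin m → ∀ j, XX j, ∑ a' : Fin m → ∀ j, AA j,
      (if C x' a' then (∏ j, Vp q1 qk h j (τ : ℕ) (fun s => x' s j) a') else 0)
      = ∑ a' : Fin m → ∀ j, AA j, (if (∀ s : Fin m, (s : ℕ) < (τ : ℕ) → a' s = a s) then
          (∑ x' : Fin m → ∀ j, XX j, (if x' τ i = v
            then (∏ j, Vp q1 qk h j (τ : ℕ) (fun s => x' s j) a') else 0)) else 0) := by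
    rw [Finset.sum_comm]
    refine Finset.sum_congr rfl fun a' _ => ?_
    by_cases hP1 : (∀ s : Fin m, (s : ℕ) < (τ : ℕ) → a' s = a s)
    · rw [if_pos hP1]
      refine Finset.sum_congr rfl fun x' _ => ?_
      by_cases hP2 : x' τ i = v
      · rw [if_pos ((hCiff x' a').mpr ⟨hP1, hP2⟩), if_pos hP2]
      · rw [if_neg (fun hc => hP2 ((hCiff x' a').mp hc).2), if_neg hP2]
    · rw [if_neg hP1]
      refine Finset.sum_eq_zero fun x' _ => ?_
      rw [if_neg (fun hc => hP1 ((hCiff x' a').mp hc).1)]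
  rw [hreorg]
  -- collapse the constrained action history
  have hcount := countA (τ : ℕ) a
    (H := fun a' => ∑ x' : Fin m → ∀ j, XX j, (if x' τ i = v
      then (∏ j, Vp q1 qk h j (τ : ℕ) (fun s => x' s j) a') else 0))
    (hH := ?_)
  · rw [hcount]
    congr 1
    -- factorize the x'-sum over players
    have hfac : ∀ x' : Fin m → ∀ j, XX j,
        (if x' τ i = v then (∏ j, Vp q1 qk h j (τ : ℕ) (fun s => x' s j) a) else 0)
          = ∏ j, (if (∀ hji : i = j, (fun s => x' s j) τ = hji ▸ v)
              then Vp q1 qk h j (τ : ℕ) (fun s => x' s j) a else 0) := by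
      intro x'
      by_cases hP2 : x' τ i = v
      · rw [if_pos hP2]
        refine Finset.prod_congr rfl fun j _ => ?_
        rw [if_pos]
        by_cases hji : i = j
        · subst hji; exact (mark_self i v _).mpr hP2
        · exact mark_of_ne hji v _
      · rw [if_neg hP2]
        refine (Finset.prod_eq_zero (Finset.mem_univ i) ?_).symm
        rw [if_neg]
        rw [mark_self i v _]
        exact hP2
    rw [Finset.sum_congr rfl fun x' _ => hfac x']
    rw [sum_x_factor (k := fun j xj => (if (∀ hji : i = j, xj τ = hji ▸ v)
      then Vp q1 qk h j (τ : ℕ) xj a else 0))]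
    rw [← Finset.mul_prod_erase Finset.univ _ (Finset.mem_univ i)]
    congr 1
    · unfold ZpC
      refine Finset.sum_congr rfl fun xi _ => ?_
      refine if_congr (mark_self i v _) rfl rfl
    · unfold Emi Zp
      refine Finset.prod_congr rfl fun j hj => ?_
      refine Finset.sum_congr rfl fun xj _ => ?_
      rw [if_pos (mark_of_ne (fun hij => (Finset.mem_erase.mp hj).1 hij.symm) v (xj τ))]
  · intro c hc y w
    refine Finset.sum_congr rfl fun x' _ => ?_
    refine if_congr Iff.rfl ?_ rfl
    refine Finset.prod_congr rfl fun j _ => ?_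
    exact Vp_update_a q1 qk h hch j _ _ y c hc w

lemma sum_marked_action (h : Strat n m XX AA) (hst : Stochastic n m XX AA h)
    (i : Fin n) (τ : Fin m) (a' : Fin m → ∀ j, AA j) (x' : Fin m → ∀ j, XX j) (b : AA i) :
    ∑ b' : ∀ j, AA j, (if b' i = b then ∏ j, h j τ a' (fun s => x' s j) (b' j) else 0)
      = h i τ a' (fun s => x' s i) b := by
  have hpt : ∀ b' : ∀ j, AA j,
      (if b' i = b then ∏ j, h j τ a' (fun s => x' s j) (b' j) else 0)
        = ∏ j, (if (∀ hji : i = j, b' j = hji ▸ b)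
            then h j τ a' (fun s => x' s j) (b' j) else 0) := by
    intro b'
    by_cases hb : b' i = b
    · rw [if_pos hb]
      refine Finset.prod_congr rfl fun j _ => ?_
      rw [if_pos]
      by_cases hji : i = j
      · subst hji; exact (mark_self i b _).mpr hb
      · exact mark_of_ne hji b _
    · rw [if_neg hb]
      refine (Finset.prod_eq_zero (Finset.mem_univ i) ?_).symm
      rw [if_neg]
      rw [mark_self i b _]
      exact hb
  rw [Finset.sum_congr rfl fun b' _ => hpt b']
  rw [sum_prod_pi (k := fun j w => if (∀ hji : i = j, w = hji ▸ b)
    then h j τ a' (fun s => x' s j) w else 0)]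
  rw [← Finset.mul_prod_erase Finset.univ _ (Finset.mem_univ i)]
  have h1 : (∑ w : AA i, if (∀ hji : i = i, w = hji ▸ b)
      then h i τ a' (fun s => x' s i) w else 0) = h i τ a' (fun s => x' s i) b := by
    have : ∀ w : AA i, (if (∀ hji : i = i, w = hji ▸ b)
        then h i τ a' (fun s => x' s i) w else 0)
        = if b = w then h i τ a' (fun s => x' s i) w else 0 := by
      intro w
      refine if_congr ((mark_self i b w).trans eq_comm) rfl rfl
    rw [Finset.sum_congr rfl fun w _ => this w]
    rw [Finset.sum_ite_eq Finset.univ b (fun w => h i τ a' (fun s => x' s i) w)]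
    simp
  rw [h1]
  have h2 : ∏ j ∈ Finset.univ.erase i, (∑ w : AA j, if (∀ hji : i = j, w = hji ▸ b)
      then h j τ a' (fun s => x' s j) w else 0) = 1 := by
    refine Finset.prod_eq_one fun j hj => ?_
    have hne : i ≠ j := fun hij => (Finset.mem_erase.mp hj).1 hij.symm
    have : ∀ w : AA j, (if (∀ hji : i = j, w = hji ▸ b)
        then h j τ a' (fun s => x' s j) w else 0) = h j τ a' (fun s => x' s j) w := by
      intro w; rw [if_pos (mark_of_ne hne b w)]
    rw [Finset.sum_congr rfl fun w _ => this w]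
    exact (hst j τ a' (fun s => x' s j)).2
  rw [h2, mul_one]

/-- Reduction of a trajectory sum with constraints `(a_{<τ} = a, x_τ^i = v, a_τ^i = b)` to
partition functions. -/
lemma num_factor (h : Strat n m XX AA) (hst : Stochastic n m XX AA h)
    (hch : Causal n m XX AA h) (hk : StochKer n m XX AA q1 qk)
    (i : Fin n) (τ : Fin m) (a : Fin m → ∀ j, AA j) (v : XX i) (b : AA i)
    (C : (Fin m → ∀ j, XX j) → (Fin m → ∀ j, AA j) → Prop)
    (hCiff : ∀ x' a', C x' a' ↔
      ((∀ s : Fin m, (s : ℕ) < (τ : ℕ) → a' s = a s) ∧ x' τ i = v ∧ a' τ i = b)) :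
    cardProd AA * ((cardProd XX * cardProd AA) ^ (m - 1 - (τ : ℕ)) *
        (∑ x' : Fin m → ∀ j, XX j, ∑ a' : Fin m → ∀ j, AA j,
          (if C x' a' then trajP n m XX AA q1 qk h x' a' else 0)))
      = muA m AA (τ : ℕ) * (ZpA q1 qk h i τ a v b * Emi q1 qk h i (τ : ℕ) a) := by
  have hCx : ∀ x a (c : Fin m) w, (τ : ℕ) < (c : ℕ) → (C (Function.update x c w) a ↔ C x a) := by
    intro x a c w hc
    rw [hCiff, hCiff]
    have : Function.update x c w τ i = x τ i := by
      rw [Function.update_of_ne]; intro hτc; rw [hτc] at hc; omega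
    rw [this]
  have hCa : ∀ x aa (c : Fin m) w, (τ : ℕ) < (c : ℕ) → (C x (Function.update aa c w) ↔ C x aa) := by
    intro x aa c w hc
    rw [hCiff, hCiff]
    have hττ : Function.update aa c w τ = aa τ := by
      rw [Function.update_of_ne]; intro hτc; rw [hτc] at hc; omega
    rw [hττ]
    constructor
    · rintro ⟨h1, h2⟩
      refine ⟨fun s hs => ?_, h2⟩
      rw [← h1 s hs, Function.update_of_ne]
      intro hsc; rw [hsc] at hs; omega
    · rintro ⟨h1, h2⟩
      refine ⟨fun s hs => ?_, h2⟩
      rw [Function.update_of_ne, h1 s hs]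
      intro hsc; rw [hsc] at hs; omega
  have hpeel := GG_peel q1 qk h hch hk τ C hCx hCa
    (fun u' _ => hdef_of_stoch q1 qk h hst C u')
  rw [← hpeel]
  -- peel the actions at time τ against the constrained kernel
  have hstep : ∀ x' : Fin m → ∀ j, XX j,
      cardProd AA * ∑ a' : Fin m → ∀ j, AA j,
          (if C x' a' then (∏ j, Vp q1 qk h j (τ : ℕ) (fun s => x' s j) a') *
            ∏ j, h j τ a' (fun s => x' s j) (a' τ j) else 0)
        = ∑ a' : Fin m → ∀ j, AA j,
            (if ((∀ s : Fin m, (s : ℕ) < (τ : ℕ) → a' s = a s) ∧ x' τ i = v)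
              then (∏ j, Vp q1 qk h j (τ : ℕ) (fun s => x' s j) a') *
                h i τ a' (fun s => x' s i) b else 0) := by
    intro x'
    have hpc := peel_coord (c := τ)
      (F := fun a' => if ((∀ s : Fin m, (s : ℕ) < (τ : ℕ) → a' s = a s) ∧ x' τ i = v)
        then (∏ j, Vp q1 qk h j (τ : ℕ) (fun s => x' s j) a') else 0)
      (K := fun a' b' => if b' i = b then ∏ j, h j τ a' (fun s => x' s j) (b' j) else 0)
      (hF := ?_) (hK := ?_)
    · have hcA : (Fintype.card (∀ j, AA j) : ℝ) = cardProd AA := by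
        rw [Fintype.card_pi]; unfold cardProd; push_cast; rfl
      rw [← hcA]
      have e1 : ∀ a' : Fin m → ∀ j, AA j,
          (if C x' a' then (∏ j, Vp q1 qk h j (τ : ℕ) (fun s => x' s j) a') *
            ∏ j, h j τ a' (fun s => x' s j) (a' τ j) else 0)
          = (if ((∀ s : Fin m, (s : ℕ) < (τ : ℕ) → a' s = a s) ∧ x' τ i = v)
              then (∏ j, Vp q1 qk h j (τ : ℕ) (fun s => x' s j) a') else 0) *
            (if a' τ i = b then ∏ j, h j τ a' (fun s => x' s j) (a' τ j) else 0) := by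
        intro a'
        by_cases h12 : ((∀ s : Fin m, (s : ℕ) < (τ : ℕ) → a' s = a s) ∧ x' τ i = v)
        · by_cases hq : a' τ i = b
          · rw [if_pos ((hCiff x' a').mpr ⟨h12.1, h12.2, hq⟩), if_pos h12, if_pos hq]
          · rw [if_neg (fun hc => hq ((hCiff x' a').mp hc).2.2), if_neg hq, mul_zero]
        · rw [if_neg (fun hc => h12 ⟨((hCiff x' a').mp hc).1, ((hCiff x' a').mp hc).2.1⟩),
            if_neg h12, zero_mul]
      rw [Finset.sum_congr rfl fun a' _ => e1 a', hpc]
      refine Finset.sum_congr rfl fun a' _ => ?_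
      rw [sum_marked_action h hst i τ a' x' b]
      by_cases h12 : ((∀ s : Fin m, (s : ℕ) < (τ : ℕ) → a' s = a s) ∧ x' τ i = v)
      · rw [if_pos h12, if_pos h12]
      · rw [if_neg h12, if_neg h12, zero_mul]
    · intro y w
      refine if_congr ?_ ?_ rfl
      · constructor
        · rintro ⟨h1, h2⟩
          refine ⟨fun s hs => ?_, h2⟩
          rw [← h1 s hs, Function.update_of_ne]
          intro hsc; rw [hsc] at hs; omega
        · rintro ⟨h1, h2⟩
          refine ⟨fun s hs => ?_, h2⟩
          rw [Function.update_of_ne, h1 s hs]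
          intro hsc; rw [hsc] at hs; omega
      · refine Finset.prod_congr rfl fun j _ => ?_
        exact Vp_update_a q1 qk h hch j _ _ y τ (le_refl _) w
    · intro y w b'
      refine if_congr Iff.rfl ?_ rfl
      refine Finset.prod_congr rfl fun j _ => ?_
      refine congrFun (hch j τ _ _ _ _ (fun s hs => ?_) (fun _ _ => rfl)) (b' j)
      rw [Function.update_of_ne]
      intro hsc; rw [hsc] at hs; omega
  unfold GG
  rw [Finset.mul_sum, Finset.sum_congr rfl fun x' _ => hstep x']
  -- reorganize
  have hreorg : ∑ x' : Fin m → ∀ j, XX j, ∑ a' : Fin m → ∀ j, AA j,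
      (if ((∀ s : Fin m, (s : ℕ) < (τ : ℕ) → a' s = a s) ∧ x' τ i = v)
        then (∏ j, Vp q1 qk h j (τ : ℕ) (fun s => x' s j) a') *
          h i τ a' (fun s => x' s i) b else 0)
      = ∑ a' : Fin m → ∀ j, AA j, (if (∀ s : Fin m, (s : ℕ) < (τ : ℕ) → a' s = a s) then
          (∑ x' : Fin m → ∀ j, XX j, (if x' τ i = v
            then (∏ j, Vp q1 qk h j (τ : ℕ) (fun s => x' s j) a') *
              h i τ a' (fun s => x' s i) b else 0)) else 0) := by
    rw [Finset.sum_comm]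
    refine Finset.sum_congr rfl fun a' _ => ?_
    by_cases hP1 : (∀ s : Fin m, (s : ℕ) < (τ : ℕ) → a' s = a s)
    · rw [if_pos hP1]
      refine Finset.sum_congr rfl fun x' _ => ?_
      by_cases hP2 : x' τ i = v
      · rw [if_pos ⟨hP1, hP2⟩, if_pos hP2]
      · rw [if_neg (fun hc => hP2 hc.2), if_neg hP2]
    · rw [if_neg hP1]
      refine Finset.sum_eq_zero fun x' _ => ?_
      rw [if_neg (fun hc => hP1 hc.1)]
  rw [hreorg]
  -- collapse the constrained action history
  have hcount := countA (τ : ℕ) a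
    (H := fun a' => ∑ x' : Fin m → ∀ j, XX j, (if x' τ i = v
      then (∏ j, Vp q1 qk h j (τ : ℕ) (fun s => x' s j) a') *
        h i τ a' (fun s => x' s i) b else 0))
    (hH := ?_)
  · rw [hcount]
    congr 1
    -- factorize over players
    have hfac : ∀ x' : Fin m → ∀ j, XX j,
        (if x' τ i = v then (∏ j, Vp q1 qk h j (τ : ℕ) (fun s => x' s j) a) *
            h i τ a (fun s => x' s i) b else 0)
          = ∏ j, (if (∀ hji : i = j, (fun s => x' s j) τ = hji ▸ v)
              then Vp q1 qk h j (τ : ℕ) (fun s => x' s j) a *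
                (if hji : i = j then h j τ a (fun s => x' s j) (hji ▸ b) else 1) else 0) := by
      intro x'
      by_cases hP2 : x' τ i = v
      · rw [if_pos hP2]
        have hsplit : ∀ j, (if (∀ hji : i = j, (fun s => x' s j) τ = hji ▸ v)
              then Vp q1 qk h j (τ : ℕ) (fun s => x' s j) a *
                (if hji : i = j then h j τ a (fun s => x' s j) (hji ▸ b) else 1) else 0)
            = Vp q1 qk h j (τ : ℕ) (fun s => x' s j) a *
                (if hji : i = j then h j τ a (fun s => x' s j) (hji ▸ b) else 1) := by
          intro j
          rw [if_pos]
          by_cases hji : i = j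
          · subst hji; exact (mark_self i v _).mpr hP2
          · exact mark_of_ne hji v _
        rw [Finset.prod_congr rfl fun j _ => hsplit j, Finset.prod_mul_distrib]
        have hd : ∏ j, (if hji : i = j then h j τ a (fun s => x' s j) (hji ▸ b) else 1)
            = h i τ a (fun s => x' s i) b := by
          rw [Finset.prod_eq_single i]
          · rw [dif_pos rfl]
          · intro j _ hji
            rw [dif_neg (fun hij => hji hij.symm)]
          · intro hni; exact absurd (Finset.mem_univ i) hni
        rw [hd]
      · rw [if_neg hP2]
        refine (Finset.prod_eq_zero (Finset.mem_univ i) ?_).symm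
        rw [if_neg]
        rw [mark_self i v _]
        exact hP2
    rw [Finset.sum_congr rfl fun x' _ => hfac x']
    rw [sum_x_factor (k := fun j xj => (if (∀ hji : i = j, xj τ = hji ▸ v)
      then Vp q1 qk h j (τ : ℕ) xj a *
        (if hji : i = j then h j τ a xj (hji ▸ b) else 1) else 0))]
    rw [← Finset.mul_prod_erase Finset.univ _ (Finset.mem_univ i)]
    congr 1
    · unfold ZpA
      refine Finset.sum_congr rfl fun xi _ => ?_
      refine if_congr (mark_self i v _) ?_ rfl
      congr 1
      rw [dif_pos rfl]
    · unfold Emi Zp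
      refine Finset.prod_congr rfl fun j hj => ?_
      refine Finset.sum_congr rfl fun xj _ => ?_
      have hne : i ≠ j := fun hij => (Finset.mem_erase.mp hj).1 hij.symm
      rw [if_pos (mark_of_ne hne v (xj τ)), dif_neg hne, mul_one]
  · intro c hc y w
    refine Finset.sum_congr rfl fun x' _ => ?_
    refine if_congr Iff.rfl ?_ rfl
    congr 1
    · refine Finset.prod_congr rfl fun j _ => ?_
      exact Vp_update_a q1 qk h hch j _ _ y c hc w
    · refine congrFun (hch i τ _ _ _ _ (fun s hs => ?_) (fun _ _ => rfl)) b
      rw [Function.update_of_ne]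
      intro hsc; rw [hsc] at hs; omega

lemma cardProd_pos (Y : Fin n → Type) [∀ i, Fintype (Y i)] [∀ i, Nonempty (Y i)] :
    0 < cardProd Y :=
  Finset.prod_pos fun j _ => by positivity

lemma muA_pos [∀ i, Nonempty (AA i)] (m' t : ℕ) : 0 < muA m' AA t := by
  refine Finset.prod_pos fun s _ => ?_
  by_cases hst : (s : ℕ) < t
  · simp [hst]
  · simp only [if_neg hst]
    exact Finset.prod_pos fun j _ => by positivity

lemma sum_sNum (g' : Strat n m XX AA) (i : Fin n) (τ : Fin m) (a : Fin m → ∀ j, AA j)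
    (v : XX i) :
    ∑ b : AA i, sNum n m XX AA q1 qk g' i τ a v b = sDen n m XX AA q1 qk g' i τ a v := by
  unfold sNum sDen
  rw [Finset.sum_comm]
  refine Finset.sum_congr rfl fun x' _ => ?_
  rw [Finset.sum_comm]
  refine Finset.sum_congr rfl fun a' _ => ?_
  have hpt : ∀ b : AA i,
      (if (∀ s : Fin m, (s : ℕ) < (τ : ℕ) → a' s = a s) ∧ x' τ i = v ∧ a' τ i = b
        then trajP n m XX AA q1 qk g' x' a' else 0)
      = (if a' τ i = b then (if (∀ s : Fin m, (s : ℕ) < (τ : ℕ) → a' s = a s) ∧ x' τ i = v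
          then trajP n m XX AA q1 qk g' x' a' else 0) else 0) := by
    intro b
    by_cases h1 : (∀ s : Fin m, (s : ℕ) < (τ : ℕ) → a' s = a s) ∧ x' τ i = v
    · by_cases h2 : a' τ i = b
      · rw [if_pos ⟨h1.1, h1.2, h2⟩, if_pos h2, if_pos h1]
      · rw [if_neg (fun hc => h2 hc.2.2), if_neg h2]
    · by_cases h2 : a' τ i = b
      · rw [if_neg (fun hc => h1 ⟨hc.1, hc.2.1⟩), if_pos h2, if_neg h1]
      · rw [if_neg (fun hc => h2 hc.2.2), if_neg h2]
  rw [Finset.sum_congr rfl fun b _ => hpt b]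
  rw [Finset.sum_ite_eq Finset.univ (a' τ i) _]
  simp

lemma sNum_nonneg (g' : Strat n m XX AA) (hg : Stochastic n m XX AA g')
    (hk : StochKer n m XX AA q1 qk) (i : Fin n) (τ : Fin m) (a : Fin m → ∀ j, AA j)
    (v : XX i) (b : AA i) : 0 ≤ sNum n m XX AA q1 qk g' i τ a v b := by
  unfold sNum
  refine Finset.sum_nonneg fun x' _ => Finset.sum_nonneg fun a' _ => ?_
  by_cases hc : (∀ s : Fin m, (s : ℕ) < (τ : ℕ) → a' s = a s) ∧ x' τ i = v ∧ a' τ i = b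
  · rw [if_pos hc]
    exact trajP_nonneg q1 qk g' (fun j t aa xi bb => (hg j t aa xi).1 bb) hk x' a'
  · rw [if_neg hc]

lemma sNum_congr (g' : Strat n m XX AA) (i : Fin n) (τ : Fin m) {a a' : Fin m → ∀ j, AA j}
    (ha : ∀ s : Fin m, (s : ℕ) < (τ : ℕ) → a s = a' s) (v : XX i) (b : AA i) :
    sNum n m XX AA q1 qk g' i τ a v b = sNum n m XX AA q1 qk g' i τ a' v b := by
  unfold sNum
  refine Finset.sum_congr rfl fun x' _ => Finset.sum_congr rfl fun y _ => ?_
  refine if_congr (and_congr ?_ Iff.rfl) rfl rfl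
  constructor
  · intro H s hs; rw [← ha s hs]; exact H s hs
  · intro H s hs; rw [ha s hs]; exact H s hs

lemma sDen_congr (g' : Strat n m XX AA) (i : Fin n) (τ : Fin m) {a a' : Fin m → ∀ j, AA j}
    (ha : ∀ s : Fin m, (s : ℕ) < (τ : ℕ) → a s = a' s) (v : XX i) :
    sDen n m XX AA q1 qk g' i τ a v = sDen n m XX AA q1 qk g' i τ a' v := by
  rw [← sum_sNum, ← sum_sNum]
  exact Finset.sum_congr rfl fun b _ => sNum_congr q1 qk g' i τ ha v b

lemma hs_causal (g' : Strat n m XX AA) (hc : Causal n m XX AA g') (i : Fin n) :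
    Causal n m XX AA (Function.update g' i (sStrat n m XX AA q1 qk g' i)) := by
  intro j t a a' xi xi' ha hx
  by_cases hji : j = i
  · subst hji
    rw [Function.update_self]
    funext b
    unfold sStrat
    rw [hx t (le_refl _), sNum_congr q1 qk g' j t ha, sDen_congr q1 qk g' j t ha]
  · rw [Function.update_of_ne hji]
    exact hc j t a a' xi xi' ha hx

lemma hs_pos (g' : Strat n m XX AA) (hg : Stochastic n m XX AA g')
    (hk : StochKer n m XX AA q1 qk) (i : Fin n) :
    ∀ j (t : Fin m) a xi b,
      0 ≤ Function.update g' i (sStrat n m XX AA q1 qk g' i) j t a xi b := by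
  intro j t a xi b
  by_cases hji : j = i
  · subst hji
    rw [Function.update_self]
    unfold sStrat
    refine div_nonneg (sNum_nonneg q1 qk g' hg hk _ _ _ _ _) ?_
    rw [← sum_sNum]
    exact Finset.sum_nonneg fun bb _ => sNum_nonneg q1 qk g' hg hk _ _ _ _ _
  · rw [Function.update_of_ne hji]
    exact (hg j t a xi).1 b

lemma Vp_hs_ne (g' : Strat n m XX AA) (i j : Fin n) (hji : j ≠ i) (t : ℕ)
    (xj : Fin m → XX j) (a : Fin m → ∀ j, AA j) :
    Vp q1 qk (Function.update g' i (sStrat n m XX AA q1 qk g' i)) j t xj a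
      = Vp q1 qk g' j t xj a := by
  unfold Vp
  congr 1
  refine Finset.prod_congr rfl fun s _ => ?_
  rw [Function.update_of_ne hji]

lemma Zp_hs_ne (g' : Strat n m XX AA) (i j : Fin n) (hji : j ≠ i) (t : ℕ)
    (a : Fin m → ∀ j, AA j) :
    Zp q1 qk (Function.update g' i (sStrat n m XX AA q1 qk g' i)) j t a
      = Zp q1 qk g' j t a := by
  unfold Zp
  exact Finset.sum_congr rfl fun xj _ => Vp_hs_ne q1 qk g' i j hji t xj a

lemma ZpA_hs_ne (g' : Strat n m XX AA) (i j : Fin n) (hji : j ≠ i) (t : Fin m)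
    (a : Fin m → ∀ j, AA j) (u : XX j) (b : AA j) :
    ZpA q1 qk (Function.update g' i (sStrat n m XX AA q1 qk g' i)) j t a u b
      = ZpA q1 qk g' j t a u b := by
  unfold ZpA
  refine Finset.sum_congr rfl fun xj _ => ?_
  rw [Vp_hs_ne q1 qk g' i j hji _ xj a, Function.update_of_ne hji]

lemma Zp_zero_all (h : Strat n m XX AA)
    (hpos : ∀ j (t : Fin m) a xj b, 0 ≤ h j t a xj b) (hk : StochKer n m XX AA q1 qk)
    (j : Fin n) (t : ℕ) (a : Fin m → ∀ j, AA j) (hz : Zp q1 qk h j t a = 0) :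
    ∀ xj, Vp q1 qk h j t xj a = 0 := by
  intro xj
  have := (Finset.sum_eq_zero_iff_of_nonneg
    (fun xj _ => Vp_nonneg q1 qk h hpos hk j t xj a)).mp hz
  exact this xj (Finset.mem_univ xj)

lemma ZpC_zero_all (h : Strat n m XX AA)
    (hpos : ∀ j (t : Fin m) a xj b, 0 ≤ h j t a xj b) (hk : StochKer n m XX AA q1 qk)
    (j : Fin n) (t : Fin m) (a : Fin m → ∀ j, AA j) (u : XX j)
    (hz : ZpC q1 qk h j t a u = 0) :
    ∀ xj, xj t = u → Vp q1 qk h j (t : ℕ) xj a = 0 := by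
  intro xj hxj
  have hnn : ∀ xj' : Fin m → XX j, (0:ℝ) ≤ (if xj' t = u then Vp q1 qk h j (t : ℕ) xj' a else 0) := by
    intro xj'
    by_cases hx : xj' t = u
    · rw [if_pos hx]; exact Vp_nonneg q1 qk h hpos hk j _ xj' a
    · rw [if_neg hx]
  have := (Finset.sum_eq_zero_iff_of_nonneg (fun xj' _ => hnn xj')).mp hz xj (Finset.mem_univ xj)
  rwa [if_pos hxj] at this

lemma ZpA_zero_of_ZpC (h : Strat n m XX AA)
    (hpos : ∀ j (t : Fin m) a xj b, 0 ≤ h j t a xj b) (hk : StochKer n m XX AA q1 qk)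
    (j : Fin n) (t : Fin m) (a : Fin m → ∀ j, AA j) (u : XX j) (b : AA j)
    (hz : ZpC q1 qk h j t a u = 0) : ZpA q1 qk h j t a u b = 0 := by
  unfold ZpA
  refine Finset.sum_eq_zero fun xj _ => ?_
  by_cases hx : xj t = u
  · rw [if_pos hx, ZpC_zero_all q1 qk h hpos hk j t a u hz xj hx, zero_mul]
  · rw [if_neg hx]

lemma ZpA_zero_of_Zp (h : Strat n m XX AA)
    (hpos : ∀ j (t : Fin m) a xj b, 0 ≤ h j t a xj b) (hk : StochKer n m XX AA q1 qk)
    (j : Fin n) (t : Fin m) (a : Fin m → ∀ j, AA j) (u : XX j) (b : AA j)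
    (hz : Zp q1 qk h j (t : ℕ) a = 0) : ZpA q1 qk h j t a u b = 0 := by
  unfold ZpA
  refine Finset.sum_eq_zero fun xj _ => ?_
  by_cases hx : xj t = u
  · rw [if_pos hx, Zp_zero_all q1 qk h hpos hk j _ a hz xj, zero_mul]
  · rw [if_neg hx]

lemma Zp_zero_succ (h : Strat n m XX AA)
    (hpos : ∀ j (t : Fin m) a xj b, 0 ≤ h j t a xj b) (hk : StochKer n m XX AA q1 qk)
    (j : Fin n) (t : ℕ) (a : Fin m → ∀ j, AA j) (hz : Zp q1 qk h j t a = 0) :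
    Zp q1 qk h j (t + 1) a = 0 := by
  have hall := Zp_zero_all q1 qk h hpos hk j t a hz
  refine Finset.sum_eq_zero fun xj _ => ?_
  rcases lt_or_ge t m with hlt | hge
  · rw [Vp_succ q1 qk h j t hlt xj a, hall xj, zero_mul]
  · have : Vp q1 qk h j (t + 1) xj a = Vp q1 qk h j t xj a := by
      unfold Vp
      congr 1
      refine Finset.prod_congr rfl fun s _ => ?_
      have h1 : (s : ℕ) < t := lt_of_lt_of_le s.isLt hge
      have h2 : (s : ℕ) < t + 1 := by omega
      rw [if_pos h1, if_pos h2]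
    rw [this]
    exact hall xj

lemma Emi_zero_succ (h : Strat n m XX AA)
    (hpos : ∀ j (t : Fin m) a xj b, 0 ≤ h j t a xj b) (hk : StochKer n m XX AA q1 qk)
    (i : Fin n) (t : ℕ) (a : Fin m → ∀ j, AA j) (hz : Emi q1 qk h i t a = 0) :
    Emi q1 qk h i (t + 1) a = 0 := by
  unfold Emi at hz ⊢
  rcases Finset.prod_eq_zero_iff.mp hz with ⟨j, hj, hjz⟩
  exact Finset.prod_eq_zero hj (Zp_zero_succ q1 qk h hpos hk j t a hjz)

/-- One-step recursion for the constrained partition function. -/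
lemma ZpC_step (h : Strat n m XX AA) (hch : Causal n m XX AA h) (j : Fin n)
    (t t' : Fin m) (htt' : (t' : ℕ) = (t : ℕ) + 1) (a : Fin m → ∀ j, AA j) (v' : XX j) :
    (Fintype.card (XX j) : ℝ) * ZpC q1 qk h j t' a v'
      = ∑ v : XX j, qk j t' v (a t) v' * ZpA q1 qk h j t a v (a t j) := by
  have hm1 : (t : ℕ) + 1 < m := by rw [← htt']; exact t'.isLt
  have hne : t ≠ t' := by intro hh; rw [hh] at htt'; omega
  -- rewrite the prefix weight one step
  have hVp : ∀ xj : Fin m → XX j, Vp q1 qk h j (t' : ℕ) xj a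
      = Vp q1 qk h j (t : ℕ) xj a * (h j t a xj (a t j) * qk j t' (xj t) (a t) (xj t')) := by
    intro xj
    have hV := Vp_succ q1 qk h j (t : ℕ) t.isLt xj a
    have hstep : Vp q1 qk h j (t' : ℕ) xj a = Vp q1 qk h j ((t : ℕ) + 1) xj a := by
      rw [htt']
    rw [hstep, hV]
    have h2 : (⟨(t : ℕ), t.isLt⟩ : Fin m) = t := Fin.ext rfl
    rw [h2]
    congr 2
    unfold Qtr
    rw [dif_pos hm1]
    have h1 : (⟨(t : ℕ) + 1, hm1⟩ : Fin m) = t' := Fin.ext (by simp [htt'])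
    rw [h1]
  unfold ZpC
  have e1 : ∀ xj : Fin m → XX j,
      (if xj t' = v' then Vp q1 qk h j (t' : ℕ) xj a else 0)
        = ∑ v : XX j, (if xj t = v then (if xj t' = v'
            then Vp q1 qk h j (t : ℕ) xj a * h j t a xj (a t j) else 0) else 0) *
              qk j t' v (a t) v' := by
    intro xj
    rw [Finset.sum_eq_single (xj t)]
    · by_cases hx' : xj t' = v'
      · rw [if_pos rfl, if_pos hx', if_pos hx', hVp xj, hx']
        ring
      · rw [if_pos rfl, if_neg hx', if_neg hx', zero_mul]
    · intro v _ hv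
      rw [if_neg (fun hh => hv hh.symm), zero_mul]
    · intro hni; exact absurd (Finset.mem_univ (xj t)) hni
  rw [Finset.sum_congr rfl fun xj _ => e1 xj, Finset.sum_comm, Finset.mul_sum]
  refine Finset.sum_congr rfl fun v _ => ?_
  rw [← Finset.sum_mul]
  rw [show ((Fintype.card (XX j) : ℝ) * ((∑ xj : Fin m → XX j, (if xj t = v then (if xj t' = v'
      then Vp q1 qk h j (t : ℕ) xj a * h j t a xj (a t j) else 0) else 0)) * qk j t' v (a t) v'))
    = ((Fintype.card (XX j) : ℝ) * (∑ xj : Fin m → XX j, (if xj t = v then (if xj t' = v'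
      then Vp q1 qk h j (t : ℕ) xj a * h j t a xj (a t j) else 0) else 0))) * qk j t' v (a t) v'
    from by ring]
  rw [mul_comm (qk j t' v (a t) v') _]
  congr 1
  -- collapse the constrained coordinate t'
  have e2 : ∀ xj : Fin m → XX j,
      (if xj t = v then (if xj t' = v' then Vp q1 qk h j (t : ℕ) xj a * h j t a xj (a t j)
        else 0) else 0)
      = (if xj t' = v' then (if xj t = v then Vp q1 qk h j (t : ℕ) xj a * h j t a xj (a t j)
        else 0) else 0) := by
    intro xj
    by_cases h1 : xj t = v <;> by_cases h2 : xj t' = v' <;> simp [h1, h2]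
  rw [Finset.sum_congr rfl fun xj _ => e2 xj]
  have hcoll := collapse_coord (c := t')
    (F := fun xj : Fin m → XX j => if xj t = v
      then Vp q1 qk h j (t : ℕ) xj a * h j t a xj (a t j) else 0)
    (hF := ?_) v'
  · rw [hcoll]
    rfl
  · intro y w
    refine if_congr ?_ ?_ rfl
    · rw [Function.update_of_ne hne]
    · congr 1
      · exact Vp_update_x q1 qk h hch j _ _ a t' (by omega) w
      · refine congrFun (hch j t a a _ _ (fun _ _ => rfl) (fun s hs => ?_)) (a t j)
        rw [Function.update_of_ne]
        intro hsc; rw [hsc] at hs; omega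

/-- The action factor of the structured strategy pulls out of `ZpA`. -/
lemma ZpA_hs_eq (g' : Strat n m XX AA) (i : Fin n) (t : Fin m) (a : Fin m → ∀ j, AA j)
    (v : XX i) (b : AA i) :
    ZpA q1 qk (Function.update g' i (sStrat n m XX AA q1 qk g' i)) i t a v b
      = (sNum n m XX AA q1 qk g' i t a v b / sDen n m XX AA q1 qk g' i t a v) *
        ZpC q1 qk (Function.update g' i (sStrat n m XX AA q1 qk g' i)) i t a v := by
  unfold ZpA ZpC
  rw [Finset.mul_sum]
  refine Finset.sum_congr rfl fun xi _ => ?_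
  by_cases hx : xi t = v
  · rw [if_pos hx, if_pos hx, Function.update_self]
    unfold sStrat
    rw [hx]
    ring
  · rw [if_neg hx, if_neg hx, mul_zero]


lemma ite_inst {p : Prop} [inst1 : Decidable p] (z : ℝ) :
    (if p then z else 0) = (@ite ℝ p (Classical.propDecidable p) z 0) := by
  by_cases h : p
  · rw [if_pos h, if_pos h]
  · rw [if_neg h, if_neg h]

lemma key_lemma (g' : Strat n m XX AA) (hg : Stochastic n m XX AA g')
    (hc : Causal n m XX AA g') (hk : StochKer n m XX AA q1 qk)
    [∀ j, Nonempty (XX j)] [∀ j, Nonempty (AA j)]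
    (i : Fin n) (τ : Fin m) (a : Fin m → ∀ j, AA j) (v : XX i) (b : AA i)
    (hINV : Emi q1 qk g' i (τ : ℕ) a *
        ZpC q1 qk (Function.update g' i (sStrat n m XX AA q1 qk g' i)) i τ a v
      = Emi q1 qk g' i (τ : ℕ) a * ZpC q1 qk g' i τ a v) :
    Emi q1 qk g' i (τ : ℕ) a *
        ZpA q1 qk (Function.update g' i (sStrat n m XX AA q1 qk g' i)) i τ a v b
      = Emi q1 qk g' i (τ : ℕ) a * ZpA q1 qk g' i τ a v b := by
  by_cases hE : Emi q1 qk g' i (τ : ℕ) a = 0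
  · rw [hE, zero_mul, zero_mul]
  · have hW := mul_left_cancel₀ hE hINV
    rw [ZpA_hs_eq q1 qk g' i τ a v b, hW]
    by_cases hZ : ZpC q1 qk g' i τ a v = 0
    · rw [hZ, mul_zero, mul_zero,
        ZpA_zero_of_ZpC q1 qk g' (fun j t aa xi bb => (hg j t aa xi).1 bb) hk i τ a v b hZ,
        mul_zero]
    · have hMden : cardProd AA * ((cardProd XX * cardProd AA) ^ (m - 1 - (τ : ℕ)) *
          sDen n m XX AA q1 qk g' i τ a v)
          = muA m AA (τ : ℕ) * (ZpC q1 qk g' i τ a v * Emi q1 qk g' i (τ : ℕ) a) := by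
        unfold sDen
        rw [Finset.sum_congr rfl (fun x' (_ : x' ∈ Finset.univ) => Finset.sum_congr rfl
          (fun a' _ => ite_inst
            (p := (∀ s : Fin m, (s : ℕ) < (τ : ℕ) → a' s = a s) ∧ x' τ i = v)
            (trajP n m XX AA q1 qk g' x' a')))]
        exact den_factor q1 qk g' hg hc hk i τ a v
          (C := fun x' a' => (∀ s : Fin m, (s : ℕ) < (τ : ℕ) → a' s = a s) ∧ x' τ i = v)
          (fun _ _ => Iff.rfl)
      have hMnum : cardProd AA * ((cardProd XX * cardProd AA) ^ (m - 1 - (τ : ℕ)) *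
          sNum n m XX AA q1 qk g' i τ a v b)
          = muA m AA (τ : ℕ) * (ZpA q1 qk g' i τ a v b * Emi q1 qk g' i (τ : ℕ) a) := by
        unfold sNum
        rw [Finset.sum_congr rfl (fun x' (_ : x' ∈ Finset.univ) => Finset.sum_congr rfl
          (fun a' _ => ite_inst
            (p := (∀ s : Fin m, (s : ℕ) < (τ : ℕ) → a' s = a s) ∧ x' τ i = v ∧ a' τ i = b)
            (trajP n m XX AA q1 qk g' x' a')))]
        exact num_factor q1 qk g' hg hc hk i τ a v b
          (C := fun x' a' => (∀ s : Fin m, (s : ℕ) < (τ : ℕ) → a' s = a s) ∧ x' τ i = v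
            ∧ a' τ i = b)
          (fun _ _ => Iff.rfl)
      have hcA : (0 : ℝ) < cardProd AA := cardProd_pos AA
      have hcX : (0 : ℝ) < cardProd XX := cardProd_pos XX
      have hP : (0 : ℝ) < (cardProd XX * cardProd AA) ^ (m - 1 - (τ : ℕ)) := by positivity
      have hmu : (0 : ℝ) < muA m AA (τ : ℕ) := muA_pos m (τ : ℕ)
      have hsden : sDen n m XX AA q1 qk g' i τ a v ≠ 0 := by
        intro h0
        rw [h0, mul_zero, mul_zero] at hMden
        exact (mul_ne_zero (ne_of_gt hmu) (mul_ne_zero hZ hE)) hMden.symm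
      have hnz : cardProd AA * (cardProd XX * cardProd AA) ^ (m - 1 - (τ : ℕ)) *
          muA m AA (τ : ℕ) * Emi q1 qk g' i (τ : ℕ) a ≠ 0 :=
        mul_ne_zero (mul_ne_zero (mul_ne_zero (ne_of_gt hcA) (ne_of_gt hP)) (ne_of_gt hmu)) hE
      have hcross : sNum n m XX AA q1 qk g' i τ a v b * ZpC q1 qk g' i τ a v
          = ZpA q1 qk g' i τ a v b * sDen n m XX AA q1 qk g' i τ a v := by
        apply mul_left_cancel₀ hnz
        calc cardProd AA * (cardProd XX * cardProd AA) ^ (m - 1 - (τ : ℕ)) *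
              muA m AA (τ : ℕ) * Emi q1 qk g' i (τ : ℕ) a *
              (sNum n m XX AA q1 qk g' i τ a v b * ZpC q1 qk g' i τ a v)
            = (cardProd AA * ((cardProd XX * cardProd AA) ^ (m - 1 - (τ : ℕ)) *
                sNum n m XX AA q1 qk g' i τ a v b)) *
              (muA m AA (τ : ℕ) * (ZpC q1 qk g' i τ a v * Emi q1 qk g' i (τ : ℕ) a)) := by
              ring
          _ = (muA m AA (τ : ℕ) * (ZpA q1 qk g' i τ a v b * Emi q1 qk g' i (τ : ℕ) a)) *
              (cardProd AA * ((cardProd XX * cardProd AA) ^ (m - 1 - (τ : ℕ)) *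
                sDen n m XX AA q1 qk g' i τ a v)) := by
              rw [hMnum, hMden]
          _ = cardProd AA * (cardProd XX * cardProd AA) ^ (m - 1 - (τ : ℕ)) *
              muA m AA (τ : ℕ) * Emi q1 qk g' i (τ : ℕ) a *
              (ZpA q1 qk g' i τ a v b * sDen n m XX AA q1 qk g' i τ a v) := by
              ring
      have hfin : sNum n m XX AA q1 qk g' i τ a v b / sDen n m XX AA q1 qk g' i τ a v *
          ZpC q1 qk g' i τ a v = ZpA q1 qk g' i τ a v b := by
        rw [div_mul_eq_mul_div, hcross, mul_div_assoc, div_self hsden, mul_one]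
      rw [hfin]

lemma inv_all (g' : Strat n m XX AA) (hg : Stochastic n m XX AA g')
    (hc : Causal n m XX AA g') (hk : StochKer n m XX AA q1 qk)
    [∀ j, Nonempty (XX j)] [∀ j, Nonempty (AA j)] (i : Fin n) :
    ∀ (t : Fin m) (a : Fin m → ∀ j, AA j) (v : XX i),
      Emi q1 qk g' i (t : ℕ) a *
          ZpC q1 qk (Function.update g' i (sStrat n m XX AA q1 qk g' i)) i t a v
        = Emi q1 qk g' i (t : ℕ) a * ZpC q1 qk g' i t a v := by
  have hchs := hs_causal q1 qk g' hc i
  suffices H : ∀ (k : ℕ) (t : Fin m), (t : ℕ) = k → ∀ a v,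
      Emi q1 qk g' i (t : ℕ) a *
          ZpC q1 qk (Function.update g' i (sStrat n m XX AA q1 qk g' i)) i t a v
        = Emi q1 qk g' i (t : ℕ) a * ZpC q1 qk g' i t a v by
    exact fun t a v => H (t : ℕ) t rfl a v
  intro k
  induction k with
  | zero =>
    intro t ht a v
    have hzero : ∀ (h1 : Strat n m XX AA) (xi : Fin m → XX i),
        Vp q1 qk h1 i (t : ℕ) xi a = (if h0 : 0 < m then q1 i (xi ⟨0, h0⟩) else 1) := by
      intro h1 xi
      unfold Vp
      rw [ht]
      rw [Finset.prod_eq_one (fun s _ => if_neg (Nat.not_lt_zero _)), mul_one]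
    congr 1
    unfold ZpC
    refine Finset.sum_congr rfl fun xi _ => ?_
    refine if_congr Iff.rfl ?_ rfl
    rw [hzero _ xi, hzero _ xi]
  | succ k ih =>
    intro t ht a v
    have hkm : k < m := by have := t.isLt; omega
    have htt : (t : ℕ) = ((⟨k, hkm⟩ : Fin m) : ℕ) + 1 := by simpa using ht
    have hXi : (0 : ℝ) < (Fintype.card (XX i) : ℝ) := by positivity
    apply mul_left_cancel₀ (ne_of_gt hXi)
    have hstep_hs := ZpC_step q1 qk
      (Function.update g' i (sStrat n m XX AA q1 qk g' i)) hchs i ⟨k, hkm⟩ t htt a v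
    have hstep_g := ZpC_step q1 qk g' hc i ⟨k, hkm⟩ t htt a v
    calc (Fintype.card (XX i) : ℝ) * (Emi q1 qk g' i (t : ℕ) a *
          ZpC q1 qk (Function.update g' i (sStrat n m XX AA q1 qk g' i)) i t a v)
        = Emi q1 qk g' i (t : ℕ) a * ((Fintype.card (XX i) : ℝ) *
            ZpC q1 qk (Function.update g' i (sStrat n m XX AA q1 qk g' i)) i t a v) := by
          ring
      _ = Emi q1 qk g' i (t : ℕ) a * ∑ u : XX i, qk i t u (a ⟨k, hkm⟩) v *
            ZpA q1 qk (Function.update g' i (sStrat n m XX AA q1 qk g' i)) i ⟨k, hkm⟩ a u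
              (a ⟨k, hkm⟩ i) := by rw [hstep_hs]
      _ = ∑ u : XX i, qk i t u (a ⟨k, hkm⟩) v * (Emi q1 qk g' i (t : ℕ) a *
            ZpA q1 qk (Function.update g' i (sStrat n m XX AA q1 qk g' i)) i ⟨k, hkm⟩ a u
              (a ⟨k, hkm⟩ i)) := by
          rw [Finset.mul_sum]; refine Finset.sum_congr rfl fun u _ => ?_; ring
      _ = ∑ u : XX i, qk i t u (a ⟨k, hkm⟩) v * (Emi q1 qk g' i (t : ℕ) a *
            ZpA q1 qk g' i ⟨k, hkm⟩ a u (a ⟨k, hkm⟩ i)) := by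
          refine Finset.sum_congr rfl fun u _ => ?_
          congr 1
          by_cases hEp : Emi q1 qk g' i ((⟨k, hkm⟩ : Fin m) : ℕ) a = 0
          · have hEz : Emi q1 qk g' i (t : ℕ) a = 0 := by
              rw [htt]
              exact Emi_zero_succ q1 qk g' (fun j tt aa xi bb => (hg j tt aa xi).1 bb) hk i _ a hEp
            rw [hEz, zero_mul, zero_mul]
          · have hkey := key_lemma q1 qk g' hg hc hk i ⟨k, hkm⟩ a u (a ⟨k, hkm⟩ i)
              (ih ⟨k, hkm⟩ rfl a u)
            have h2 := mul_left_cancel₀ hEp hkey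
            rw [h2]
      _ = Emi q1 qk g' i (t : ℕ) a * ∑ u : XX i, qk i t u (a ⟨k, hkm⟩) v *
            ZpA q1 qk g' i ⟨k, hkm⟩ a u (a ⟨k, hkm⟩ i) := by
          rw [Finset.mul_sum]; refine Finset.sum_congr rfl fun u _ => ?_; ring
      _ = Emi q1 qk g' i (t : ℕ) a * ((Fintype.card (XX i) : ℝ) *
            ZpC q1 qk g' i t a v) := by rw [hstep_g]
      _ = (Fintype.card (XX i) : ℝ) * (Emi q1 qk g' i (t : ℕ) a *
            ZpC q1 qk g' i t a v) := by ring


lemma ite_all_prod (P : ∀ _ : Fin n, Prop) (F : Fin n → ℝ) :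
    (if (∀ j, P j) then ∏ j, F j else 0) = ∏ j, (if P j then F j else 0) := by
  by_cases h : ∀ j, P j
  · rw [if_pos h]; exact Finset.prod_congr rfl fun j _ => (if_pos (h j)).symm
  · rw [if_neg h]
    push_neg at h
    obtain ⟨j0, hj0⟩ := h
    refine (Finset.prod_eq_zero (Finset.mem_univ j0) ?_).symm
    rw [if_neg hj0]

/-- The `sDen`-version of `den_factor`, with the instance bridged. -/
lemma sDen_factor (g' : Strat n m XX AA) (hg : Stochastic n m XX AA g')
    (hc : Causal n m XX AA g') (hk : StochKer n m XX AA q1 qk)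
    (i : Fin n) (τ : Fin m) (a : Fin m → ∀ j, AA j) (v : XX i) :
    cardProd AA * ((cardProd XX * cardProd AA) ^ (m - 1 - (τ : ℕ)) *
        sDen n m XX AA q1 qk g' i τ a v)
      = muA m AA (τ : ℕ) * (ZpC q1 qk g' i τ a v * Emi q1 qk g' i (τ : ℕ) a) := by
  unfold sDen
  rw [Finset.sum_congr rfl (fun x' (_ : x' ∈ Finset.univ) => Finset.sum_congr rfl
    (fun a' _ => ite_inst
      (p := (∀ s : Fin m, (s : ℕ) < (τ : ℕ) → a' s = a s) ∧ x' τ i = v)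
      (trajP n m XX AA q1 qk g' x' a')))]
  exact den_factor q1 qk g' hg hc hk i τ a v
    (C := fun x' a' => (∀ s : Fin m, (s : ℕ) < (τ : ℕ) → a' s = a s) ∧ x' τ i = v)
    (fun _ _ => Iff.rfl)

/-- The defect terms vanish for the structured-strategy profile. -/
lemma hdef_hs (g' : Strat n m XX AA) (hg : Stochastic n m XX AA g')
    (hc : Causal n m XX AA g') (hk : StochKer n m XX AA q1 qk)
    [∀ j, Nonempty (XX j)] [∀ j, Nonempty (AA j)] (i : Fin n)
    (C : (Fin m → ∀ j, XX j) → (Fin m → ∀ j, AA j) → Prop) (u' : Fin m) :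
    ∑ x' : Fin m → ∀ j, XX j, ∑ a' : Fin m → ∀ j, AA j,
      (if C x' a' then (∏ j, Vp q1 qk (Function.update g' i (sStrat n m XX AA q1 qk g' i)) j
          (u' : ℕ) (fun s => x' s j) a') *
        (1 - ∑ b : ∀ j, AA j, ∏ j, Function.update g' i (sStrat n m XX AA q1 qk g' i) j u' a'
          (fun s => x' s j) (b j)) else 0) = 0 := by
  have hposs := hs_pos q1 qk g' hg hk i
  refine Finset.sum_eq_zero fun x' _ => Finset.sum_eq_zero fun a' _ => ?_
  by_cases hc' : C x' a'
  swap
  · rw [if_neg hc']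
  rw [if_pos hc']
  have hact : (∑ b : ∀ j, AA j, ∏ j, Function.update g' i (sStrat n m XX AA q1 qk g' i) j u' a'
      (fun s => x' s j) (b j))
      = ∑ b : AA i, sStrat n m XX AA q1 qk g' i u' a' (fun s => x' s i) b := by
    rw [sum_prod_pi (k := fun j w => Function.update g' i (sStrat n m XX AA q1 qk g' i) j u' a'
      (fun s => x' s j) w)]
    rw [← Finset.mul_prod_erase Finset.univ _ (Finset.mem_univ i)]
    have h1 : ∏ j ∈ Finset.univ.erase i, (∑ w : AA j,
        Function.update g' i (sStrat n m XX AA q1 qk g' i) j u' a' (fun s => x' s j) w) = 1 := by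
      refine Finset.prod_eq_one fun j hj => ?_
      rw [Function.update_of_ne (Finset.mem_erase.mp hj).1]
      exact (hg j u' a' (fun s => x' s j)).2
    rw [h1, mul_one, Function.update_self]
  rw [hact]
  by_cases hden : sDen n m XX AA q1 qk g' i u' a' (x' u' i) = 0
  · -- the prefix weight itself vanishes
    have hMden := sDen_factor q1 qk g' hg hc hk i u' a' (x' u' i)
    rw [hden, mul_zero, mul_zero] at hMden
    have hmu : (0 : ℝ) < muA m AA (u' : ℕ) := muA_pos m (u' : ℕ)
    have hzz : ZpC q1 qk g' i u' a' (x' u' i) * Emi q1 qk g' i (u' : ℕ) a' = 0 := by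
      by_contra hne
      exact hne (by
        have := hMden.symm
        rcases mul_eq_zero.mp this with h1 | h2
        · exact absurd h1 (ne_of_gt hmu)
        · exact h2)
    have hEZ : Emi q1 qk g' i (u' : ℕ) a' *
        ZpC q1 qk (Function.update g' i (sStrat n m XX AA q1 qk g' i)) i u' a' (x' u' i) = 0 := by
      rw [inv_all q1 qk g' hg hc hk i u' a' (x' u' i)]
      rw [mul_comm] at hzz ⊢
      rw [mul_comm]
      exact hzz
    have hprod : (∏ j, Vp q1 qk (Function.update g' i (sStrat n m XX AA q1 qk g' i)) j
        (u' : ℕ) (fun s => x' s j) a') = 0 := by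
      rcases mul_eq_zero.mp hEZ with hE | hZ
      · obtain ⟨j0, hj0mem, hj0⟩ := Finset.prod_eq_zero_iff.mp hE
        have hne : j0 ≠ i := (Finset.mem_erase.mp hj0mem).1
        refine Finset.prod_eq_zero (Finset.mem_univ j0) ?_
        rw [Vp_hs_ne q1 qk g' i j0 hne]
        exact Zp_zero_all q1 qk g' (fun j tt aa xi bb => (hg j tt aa xi).1 bb) hk j0 _ a' hj0
          (fun s => x' s j0)
      · refine Finset.prod_eq_zero (Finset.mem_univ i) ?_
        exact ZpC_zero_all q1 qk (Function.update g' i (sStrat n m XX AA q1 qk g' i)) hposs hk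
          i u' a' (x' u' i) hZ (fun s => x' s i) rfl
    rw [hprod, zero_mul]
  · -- the action kernel is properly normalized
    have hsum1 : (∑ b : AA i, sStrat n m XX AA q1 qk g' i u' a' (fun s => x' s i) b) = 1 := by
      unfold sStrat
      rw [← Finset.sum_div]
      rw [sum_sNum q1 qk g' i u' a' (x' u' i)]
      exact div_self hden
    rw [hsum1]
    simp

/-- Core of the marginal equality, with an abstract constraint predicate. -/
lemma marg_core (g' : Strat n m XX AA) (hg : Stochastic n m XX AA g')
    (hc : Causal n m XX AA g') (hk : StochKer n m XX AA q1 qk)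
    [∀ j, Nonempty (XX j)] [∀ j, Nonempty (AA j)] (i : Fin n)
    (τ : Fin m) (xv : ∀ j, XX j) (av : ∀ j, AA j)
    (C : (Fin m → ∀ j, XX j) → (Fin m → ∀ j, AA j) → Prop)
    (hCiff : ∀ x' a', C x' a' ↔ (x' τ = xv ∧ a' τ = av)) :
    (∑ x' : Fin m → ∀ j, XX j, ∑ a' : Fin m → ∀ j, AA j,
      (if C x' a' then trajP n m XX AA q1 qk
        (Function.update g' i (sStrat n m XX AA q1 qk g' i)) x' a' else 0))
    = ∑ x' : Fin m → ∀ j, XX j, ∑ a' : Fin m → ∀ j, AA j,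
        (if C x' a' then trajP n m XX AA q1 qk g' x' a' else 0) := by
  have hchs := hs_causal q1 qk g' hc i
  have hCx : ∀ x a (c : Fin m) w, (τ : ℕ) < (c : ℕ) → (C (Function.update x c w) a ↔ C x a) := by
    intro x a c w hcc
    rw [hCiff, hCiff]
    have h' : Function.update x c w τ = x τ := by
      rw [Function.update_of_ne]; intro hτc; rw [hτc] at hcc; omega
    rw [h']
  have hCa : ∀ x a (c : Fin m) w, (τ : ℕ) < (c : ℕ) → (C x (Function.update a c w) ↔ C x a) := by
    intro x a c w hcc
    rw [hCiff, hCiff]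
    have h' : Function.update a c w τ = a τ := by
      rw [Function.update_of_ne]; intro hτc; rw [hτc] at hcc; omega
    rw [h']
  have hpeel_g := GG_peel q1 qk g' hc hk τ C hCx hCa
    (fun u' _ => hdef_of_stoch q1 qk g' hg C u')
  have hpeel_hs := GG_peel q1 qk (Function.update g' i (sStrat n m XX AA q1 qk g' i))
    hchs hk τ C hCx hCa (fun u' _ => hdef_hs q1 qk g' hg hc hk i C u')
  have hP : (0 : ℝ) < (cardProd XX * cardProd AA) ^ (m - 1 - (τ : ℕ)) := by
    have hcA : (0 : ℝ) < cardProd AA := cardProd_pos AA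
    have hcX : (0 : ℝ) < cardProd XX := cardProd_pos XX
    positivity
  apply mul_left_cancel₀ (ne_of_gt hP)
  rw [← hpeel_g, ← hpeel_hs]
  -- compare the two GG's
  have hGG : ∀ h1 : Strat n m XX AA,
      GG q1 qk h1 C τ = ∑ a' : Fin m → ∀ j, AA j, (if a' τ = av
        then (∏ j, ZpA q1 qk h1 j τ a' (xv j) (av j)) else 0) := by
    intro h1
    unfold GG
    rw [Finset.sum_comm]
    refine Finset.sum_congr rfl fun a' _ => ?_
    by_cases hq : a' τ = av
    · rw [if_pos hq]
      have e1 : ∀ x' : Fin m → ∀ j, XX j,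
          (if C x' a' then (∏ j, Vp q1 qk h1 j (τ : ℕ) (fun s => x' s j) a') *
            ∏ j, h1 j τ a' (fun s => x' s j) (a' τ j) else 0)
          = (if (∀ j, x' τ j = xv j) then ∏ j, (Vp q1 qk h1 j (τ : ℕ) (fun s => x' s j) a' *
              h1 j τ a' (fun s => x' s j) (av j)) else 0) := by
        intro x'
        have hiff : C x' a' ↔ (∀ j, x' τ j = xv j) := by
          rw [hCiff, funext_iff]
          simp [hq]
        refine if_congr hiff ?_ rfl
        rw [Finset.prod_mul_distrib, hq]
      rw [Finset.sum_congr rfl fun x' _ => e1 x']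
      have e2 : ∀ x' : Fin m → ∀ j, XX j,
          (if (∀ j, x' τ j = xv j) then ∏ j, (Vp q1 qk h1 j (τ : ℕ) (fun s => x' s j) a' *
              h1 j τ a' (fun s => x' s j) (av j)) else 0)
          = ∏ j, (if (fun s => x' s j) τ = xv j
              then Vp q1 qk h1 j (τ : ℕ) (fun s => x' s j) a' *
                h1 j τ a' (fun s => x' s j) (av j) else 0) := by
        intro x'
        exact ite_all_prod (P := fun j => x' τ j = xv j) _
      rw [Finset.sum_congr rfl fun x' _ => e2 x']
      rw [sum_x_factor (k := fun j xj => (if xj τ = xv j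
        then Vp q1 qk h1 j (τ : ℕ) xj a' * h1 j τ a' xj (av j) else 0))]
      rfl
    · rw [if_neg hq]
      refine Finset.sum_eq_zero fun x' _ => ?_
      rw [if_neg (fun hcc => hq ((hCiff x' a').mp hcc).2)]
  rw [hGG, hGG]
  refine Finset.sum_congr rfl fun a' _ => ?_
  refine if_congr Iff.rfl ?_ rfl
  by_cases hE : Emi q1 qk g' i (τ : ℕ) a' = 0
  · obtain ⟨j0, hj0mem, hj0⟩ := Finset.prod_eq_zero_iff.mp hE
    have hne : j0 ≠ i := (Finset.mem_erase.mp hj0mem).1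
    have hz : ZpA q1 qk g' j0 τ a' (xv j0) (av j0) = 0 :=
      ZpA_zero_of_Zp q1 qk g' (fun j tt aa xi bb => (hg j tt aa xi).1 bb) hk j0 τ a' _ _ hj0
    rw [Finset.prod_eq_zero (Finset.mem_univ j0)
        (by rw [ZpA_hs_ne q1 qk g' i j0 hne]; exact hz),
      Finset.prod_eq_zero (Finset.mem_univ j0) hz]
  · have hkey := key_lemma q1 qk g' hg hc hk i τ a' (xv i) (av i)
      (inv_all q1 qk g' hg hc hk i τ a' (xv i))
    have h2 := mul_left_cancel₀ hE hkey
    refine Finset.prod_congr rfl fun j _ => ?_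
    by_cases hji : j = i
    · subst hji; exact h2
    · exact ZpA_hs_ne q1 qk g' i j hji τ a' _ _

/-- Equality of the joint `(x_τ, a_τ)` marginals. -/
lemma marg_eq (g' : Strat n m XX AA) (hg : Stochastic n m XX AA g')
    (hc : Causal n m XX AA g') (hk : StochKer n m XX AA q1 qk)
    [∀ j, Nonempty (XX j)] [∀ j, Nonempty (AA j)] (i : Fin n)
    (τ : Fin m) (xv : ∀ j, XX j) (av : ∀ j, AA j) :
    margXA n m XX AA q1 qk (Function.update g' i (sStrat n m XX AA q1 qk g' i)) τ xv av
      = margXA n m XX AA q1 qk g' τ xv av := by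
  unfold margXA
  refine Eq.trans ?e1 (Eq.trans (marg_core q1 qk g' hg hc hk i τ xv av
      (C := fun x' a' => x' τ = xv ∧ a' τ = av) (fun _ _ => Iff.rfl)) ?e2)
  · exact Finset.sum_congr rfl fun x' _ => Finset.sum_congr rfl fun a' _ =>
      ite_inst (p := x' τ = xv ∧ a' τ = av) _
  · exact Finset.sum_congr rfl fun x' _ => Finset.sum_congr rfl fun a' _ =>
      (ite_inst (p := x' τ = xv ∧ a' τ = av) _).symm

/-- Equality of total expected rewards. -/
lemma Jval_eq (g' : Strat n m XX AA) (hg : Stochastic n m XX AA g')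
    (hc : Causal n m XX AA g') (hk : StochKer n m XX AA q1 qk)
    [∀ j, Nonempty (XX j)] [∀ j, Nonempty (AA j)] (i : Fin n)
    (R : ∀ _ : Fin n, (∀ j, XX j) → (∀ j, AA j) → ℝ) :
    Jval n m XX AA q1 qk (Function.update g' i (sStrat n m XX AA q1 qk g' i)) R i
      = Jval n m XX AA q1 qk g' R i := by
  have hpt : ∀ h1 : Strat n m XX AA, Jval n m XX AA q1 qk h1 R i
      = ∑ τ : Fin m, ∑ xv : ∀ j, XX j, ∑ av : ∀ j, AA j,
          R i xv av * margXA n m XX AA q1 qk h1 τ xv av := by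
    intro h1
    have hcollapse : ∀ (τ : Fin m),
        (∑ xv : ∀ j, XX j, ∑ av : ∀ j, AA j,
          R i xv av * margXA n m XX AA q1 qk h1 τ xv av)
        = ∑ x : Fin m → ∀ j, XX j, ∑ a : Fin m → ∀ j, AA j,
            trajP n m XX AA q1 qk h1 x a * R i (x τ) (a τ) := by
      intro τ
      unfold margXA
      calc ∑ xv : ∀ j, XX j, ∑ av : ∀ j, AA j, R i xv av *
            ∑ x : Fin m → ∀ j, XX j, ∑ a : Fin m → ∀ j, AA j,
              (if x τ = xv ∧ a τ = av then trajP n m XX AA q1 qk h1 x a else 0)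
          = ∑ xv : ∀ j, XX j, ∑ av : ∀ j, AA j,
              ∑ x : Fin m → ∀ j, XX j, ∑ a : Fin m → ∀ j, AA j,
              (if x τ = xv ∧ a τ = av then trajP n m XX AA q1 qk h1 x a * R i xv av else 0) := by
            refine Finset.sum_congr rfl fun xv _ => Finset.sum_congr rfl fun av _ => ?_
            rw [Finset.mul_sum]
            refine Finset.sum_congr rfl fun x _ => ?_
            rw [Finset.mul_sum]
            refine Finset.sum_congr rfl fun a _ => ?_
            by_cases hcc : x τ = xv ∧ a τ = av
            · rw [if_pos hcc, if_pos hcc]; ring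
            · rw [if_neg hcc, if_neg hcc, mul_zero]
        _ = ∑ xv : ∀ j, XX j, ∑ x : Fin m → ∀ j, XX j,
              ∑ av : ∀ j, AA j, ∑ a : Fin m → ∀ j, AA j,
              (if x τ = xv ∧ a τ = av then trajP n m XX AA q1 qk h1 x a * R i xv av else 0) := by
            refine Finset.sum_congr rfl fun xv _ => ?_
            exact Finset.sum_comm
        _ = ∑ x : Fin m → ∀ j, XX j, ∑ xv : ∀ j, XX j,
              ∑ av : ∀ j, AA j, ∑ a : Fin m → ∀ j, AA j,
              (if x τ = xv ∧ a τ = av then trajP n m XX AA q1 qk h1 x a * R i xv av else 0) :=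
            Finset.sum_comm
        _ = ∑ x : Fin m → ∀ j, XX j, ∑ xv : ∀ j, XX j,
              ∑ a : Fin m → ∀ j, AA j, ∑ av : ∀ j, AA j,
              (if x τ = xv ∧ a τ = av then trajP n m XX AA q1 qk h1 x a * R i xv av else 0) := by
            refine Finset.sum_congr rfl fun x _ => Finset.sum_congr rfl fun xv _ => ?_
            exact Finset.sum_comm
        _ = ∑ x : Fin m → ∀ j, XX j, ∑ a : Fin m → ∀ j, AA j,
              ∑ xv : ∀ j, XX j, ∑ av : ∀ j, AA j,
              (if x τ = xv ∧ a τ = av then trajP n m XX AA q1 qk h1 x a * R i xv av else 0) := by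
            refine Finset.sum_congr rfl fun x _ => ?_
            exact Finset.sum_comm
        _ = ∑ x : Fin m → ∀ j, XX j, ∑ a : Fin m → ∀ j, AA j,
              trajP n m XX AA q1 qk h1 x a * R i (x τ) (a τ) := by
            refine Finset.sum_congr rfl fun x _ => Finset.sum_congr rfl fun a _ => ?_
            have e1 : ∀ xv : ∀ j, XX j, (∑ av : ∀ j, AA j,
                (if x τ = xv ∧ a τ = av then trajP n m XX AA q1 qk h1 x a * R i xv av else 0))
                = (if x τ = xv then trajP n m XX AA q1 qk h1 x a * R i xv (a τ) else 0) := by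
              intro xv
              have e2 : ∀ av : ∀ j, AA j,
                  (if x τ = xv ∧ a τ = av then trajP n m XX AA q1 qk h1 x a * R i xv av else 0)
                  = (if a τ = av then (if x τ = xv
                      then trajP n m XX AA q1 qk h1 x a * R i xv av else 0) else 0) := by
                intro av
                by_cases h1' : x τ = xv <;> by_cases h2' : a τ = av <;>
                  simp [h1', h2']
              rw [Finset.sum_congr rfl fun av _ => e2 av]
              rw [Finset.sum_ite_eq Finset.univ (a τ) _]
              simp
            rw [Finset.sum_congr rfl fun xv _ => e1 xv]
            rw [Finset.sum_ite_eq Finset.univ (x τ) _]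
            simp
    unfold Jval
    calc ∑ x : Fin m → ∀ j, XX j, ∑ a : Fin m → ∀ j, AA j,
          trajP n m XX AA q1 qk h1 x a * ∑ τ : Fin m, R i (x τ) (a τ)
        = ∑ x : Fin m → ∀ j, XX j, ∑ a : Fin m → ∀ j, AA j,
            ∑ τ : Fin m, trajP n m XX AA q1 qk h1 x a * R i (x τ) (a τ) := by
          refine Finset.sum_congr rfl fun x _ => Finset.sum_congr rfl fun a _ => ?_
          exact Finset.mul_sum _ _ _
      _ = ∑ x : Fin m → ∀ j, XX j, ∑ τ : Fin m, ∑ a : Fin m → ∀ j, AA j,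
            trajP n m XX AA q1 qk h1 x a * R i (x τ) (a τ) := by
          refine Finset.sum_congr rfl fun x _ => ?_
          exact Finset.sum_comm
      _ = ∑ τ : Fin m, ∑ x : Fin m → ∀ j, XX j, ∑ a : Fin m → ∀ j, AA j,
            trajP n m XX AA q1 qk h1 x a * R i (x τ) (a τ) := Finset.sum_comm
      _ = ∑ τ : Fin m, ∑ xv : ∀ j, XX j, ∑ av : ∀ j, AA j,
            R i xv av * margXA n m XX AA q1 qk h1 τ xv av := by
          refine Finset.sum_congr rfl fun τ _ => (hcollapse τ).symm
  rw [hpt, hpt]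
  refine Finset.sum_congr rfl fun τ _ => Finset.sum_congr rfl fun xv _ =>
    Finset.sum_congr rfl fun av _ => ?_
  rw [marg_eq q1 qk g' hg hc hk i τ xv av]

end Proof


/-- sufficiency of the current type: replacing player `i`'s strategy by the
structured strategy `s^i` derived from `g` leaves all joint `(x_t, a_t)` distributions,
and hence all total expected rewards, unchanged. -/
theorem structured_strategy_sufficiency
    (g : Strat N T X A) (i : Fin N)
    (R : ∀ _ : Fin N, (∀ j, X j) → (∀ j, A j) → ℝ)
    (hK : StochKer N T X A Q1 Qk)
    (hg : Stochastic N T X A g) (hc : Causal N T X A g) :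
    (∀ (τ : Fin T) (x : ∀ j, X j) (av : ∀ j, A j),
      margXA N T X A Q1 Qk (Function.update g i (sStrat N T X A Q1 Qk g i)) τ x av
        = margXA N T X A Q1 Qk g τ x av) ∧
    Jval N T X A Q1 Qk (Function.update g i (sStrat N T X A Q1 Qk g i)) R i
      = Jval N T X A Q1 Qk g R i := by
  rcases Nat.eq_zero_or_pos T with hT0 | hT
  · subst hT0
    constructor
    · intro τ
      exact absurd τ.isLt (by omega)
    · unfold Jval
      simp
  · by_cases hX : ∀ j, Nonempty (X j)
    · by_cases hA : ∀ j, Nonempty (A j)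
      · haveI := hX
        haveI := hA
        constructor
        · intro τ x av
          exact marg_eq Q1 Qk g hg hc hK i τ x av
        · exact Jval_eq Q1 Qk g hg hc hK i R
      · push_neg at hA
        obtain ⟨j0, hj0⟩ := hA
        haveI : IsEmpty (A j0) := hj0
        haveI hE1 : IsEmpty (∀ j, A j) := ⟨fun f => IsEmpty.false (f j0)⟩
        haveI hE2 : IsEmpty (Fin T → ∀ j, A j) := ⟨fun f => IsEmpty.false (f ⟨0, hT⟩)⟩
        constructor
        · intro τ x av
          exact (hE1.false av).elim
        · unfold Jval
          simp [Finset.univ_eq_empty]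
    · push_neg at hX
      obtain ⟨j0, hj0⟩ := hX
      haveI : IsEmpty (X j0) := hj0
      haveI hE1 : IsEmpty (∀ j, X j) := ⟨fun f => IsEmpty.false (f j0)⟩
      haveI hE2 : IsEmpty (Fin T → ∀ j, X j) := ⟨fun f => IsEmpty.false (f ⟨0, hT⟩)⟩
      constructor
      · intro τ x av
        exact (hE1.false x).elim
      · unfold Jval
        simp [Finset.univ_eq_empty]


end DynGame
end
end

section
/- The conditional probability s_t^i(a_t^i | a_{1:t-1}, x_t^i) := P^g(a_t^i | a_{1:t-1}, x_t^i) depends on the strategy profile g only through player i's own strategy g^i; explicitly, s_t^i(a_t^i | a_{1:t-1}, x_t^i) = [Σ_{x_{1:t-1}^i} P^{g^i}(x_{1:t}^i | a_{1:t-1}) g_t^i(a_t^i | a_{1:t-1}, x_{1:t}^i)] / [Σ_{ã_t^i} Σ_{x̃_{1:t-1}^i} P^{g^i}(x̃_{1:t-1}^i, x_t^i | a_{1:t-1}) g_t^i(ã_t^i | a_{1:t-1}, x̃_{1:t-1}^i x_t^i)]. -/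
open scoped Classical BigOperators

noncomputable section

namespace DynGame

variable (N T : ℕ) (X A : Fin N → Type)
  [∀ i, Fintype (X i)] [∀ i, Fintype (A i)]

variable (Q1 : ∀ i, X i → ℝ) (Qk : ∀ i, Fin T → X i → (∀ j, A j) → X i → ℝ)

/-- Player-`i`-only unnormalized weight of `(x_{1:t}^i, a_{1:t-1})` (the factor
`Q_1^i(x_1^i) ∏_{n=2}^t Q_n^i(x_n^i|x_{n-1}^i,a_{n-1}) ∏_{n=1}^{t-1} g_n^i(a_n^i|a_{1:n-1},x_{1:n}^i)`,
which depends on the profile only through `g^i`); `τ` is the 0-based index of period `t`. -/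
def pfac (g : Strat N T X A) (i : Fin N) (τ : Fin T)
    (xi : Fin T → X i) (a : Fin T → ∀ j, A j) : ℝ :=
  (if h : 0 < T then Q1 i (xi ⟨0, h⟩) else 1) *
  ∏ s : Fin T,
    ((if (s : ℕ) < (τ : ℕ) then g i s a xi (a s i) else 1) *
     (if h2 : (s : ℕ) + 1 ≤ (τ : ℕ) ∧ (s : ℕ) + 1 < T then
        Qk i ⟨(s : ℕ) + 1, h2.2⟩ (xi s) (a s) (xi ⟨(s : ℕ) + 1, h2.2⟩) else 1))

set_option linter.unusedSectionVars false
set_option linter.unusedVariables false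

/-! ### Auxiliary machinery for the proof of the structured strategy formula. -/

section AuxSums

variable {ι : Type*} [Fintype ι] [DecidableEq ι] {β : ι → Type*} [∀ a, Fintype (β a)]
  [∀ a, DecidableEq (β a)]

lemma sum_fiber (m : ι) (d : β m) (φ : (∀ a, β a) → ℝ) :
    ∑ f, φ f = ∑ f, if f m = d then ∑ v, φ (Function.update f m v) else 0 := by
  have h1 : ∀ f : ∀ a, β a, (if f m = d then ∑ v, φ (Function.update f m v) else 0)
      = ∑ v, if f m = d then φ (Function.update f m v) else 0 := by
    intro f; split <;> simp
  simp only [h1]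
  rw [Finset.sum_comm]
  have h2 : ∀ v : β m, (∑ f, if f m = d then φ (Function.update f m v) else 0)
      = ∑ f, if f m = v then φ f else 0 := by
    intro v
    rw [← Finset.sum_filter, ← Finset.sum_filter]
    refine Finset.sum_nbij' (fun f => Function.update f m v) (fun f => Function.update f m d)
      ?_ ?_ ?_ ?_ ?_
    · intro f hf
      simp [Finset.mem_filter]
    · intro f hf
      simp [Finset.mem_filter]
    · intro f hf
      simp only [Finset.mem_filter, Finset.mem_univ, true_and] at hf
      show Function.update (Function.update f m v) m d = f
      rw [Function.update_idem, ← hf, Function.update_eq_self]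
    · intro f hf
      simp only [Finset.mem_filter, Finset.mem_univ, true_and] at hf
      show Function.update (Function.update f m d) m v = f
      rw [Function.update_idem, ← hf, Function.update_eq_self]
    · intro f hf; rfl
  simp only [h2]
  rw [Finset.sum_comm]
  apply Finset.sum_congr rfl
  intro f _
  rw [Finset.sum_ite_eq]
  simp

lemma sum_pin_prod (i : ι) (b0 : β i) (h : ∀ j, β j → ℝ)
    (hsum : ∀ j, j ≠ i → ∑ b, h j b = 1) :
    ∑ v : ∀ j, β j, (if v i = b0 then ∏ j, h j (v j) else 0) = h i b0 := by
  classical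
  set H : ∀ j, β j → ℝ := Function.update h i (fun b => if b = b0 then h i b else 0) with hH
  have key : ∀ v : ∀ j, β j, (if v i = b0 then ∏ j, h j (v j) else 0) = ∏ j, H j (v j) := by
    intro v
    by_cases hv : v i = b0
    · rw [if_pos hv]
      apply Finset.prod_congr rfl
      intro j _
      by_cases hj : j = i
      · subst hj; simp [hH, hv]
      · simp [hH, hj]
    · rw [if_neg hv]
      symm
      apply Finset.prod_eq_zero (Finset.mem_univ i)
      simp [hH, hv]
  simp only [key]
  rw [← Fintype.piFinset_univ, ← Finset.prod_univ_sum]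
  have : ∀ j, (∑ b, H j b) = if j = i then h i b0 else 1 := by
    intro j
    by_cases hj : j = i
    · subst hj; simp only [hH, Function.update_self, if_pos rfl]
      simp
    · rw [if_neg hj]
      simp only [hH, Function.update_of_ne hj]
      exact hsum j hj
  simp only [this]
  simp

lemma sum_unpin (P : Finset ι) (d : ∀ s, β s) (Ψ : (∀ s, β s) → ℝ)
    (hΨ : ∀ f s v, s ∈ P → Ψ (Function.update f s v) = Ψ f) :
    ∑ f, Ψ f = (∏ s ∈ P, (Fintype.card (β s) : ℝ)) *
      ∑ f, if (∀ s ∈ P, f s = d s) then Ψ f else 0 := by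
  classical
  induction P using Finset.induction generalizing Ψ with
  | empty => simp
  | @insert s0 P hs0 ih =>
    have step := sum_fiber s0 (d s0) Ψ
    have hconst : ∀ f : ∀ a, β a, (∑ v, Ψ (Function.update f s0 v))
        = (Fintype.card (β s0) : ℝ) * Ψ f := by
      intro f
      have hv : ∀ v : β s0, Ψ (Function.update f s0 v) = Ψ f :=
        fun v => hΨ f s0 v (Finset.mem_insert_self _ _)
      rw [Finset.sum_congr rfl (fun v _ => hv v), Finset.sum_const, Finset.card_univ,
        nsmul_eq_mul]
    simp only [hconst] at step
    have hstep2 : ∑ f, Ψ f = (Fintype.card (β s0) : ℝ) *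
        ∑ f, (if f s0 = d s0 then Ψ f else 0) := by
      rw [step, Finset.mul_sum]
      apply Finset.sum_congr rfl
      intro f _
      split <;> simp
    have ih' := ih (fun f => if f s0 = d s0 then Ψ f else 0) (by
      intro f s v hs
      have hne : s ≠ s0 := fun h => hs0 (h ▸ hs)
      show (if Function.update f s v s0 = d s0 then Ψ (Function.update f s v) else 0)
        = (if f s0 = d s0 then Ψ f else 0)
      rw [Function.update_of_ne hne.symm, hΨ f s v (Finset.mem_insert_of_mem hs)])
    rw [hstep2, ih', Finset.prod_insert hs0, mul_assoc]
    congr 1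
    congr 1
    apply Finset.sum_congr rfl
    intro f _
    by_cases h1 : f s0 = d s0 <;> by_cases h2 : ∀ s ∈ P, f s = d s <;>
      simp [h1, h2, Finset.forall_mem_insert]

end AuxSums
/-- Truncated trajectory weight: strategy factors for times `s < mg`, kernel factors
for transitions into times `< mk`. -/
def Wt (g : Strat N T X A) (mg mk : ℕ)
    (x : Fin T → ∀ j, X j) (a : Fin T → ∀ j, A j) : ℝ :=
  (if h : 0 < T then ∏ j, Q1 j (x ⟨0, h⟩ j) else 1) *
  ∏ s : Fin T,
    ((if (s : ℕ) < mg then ∏ j, g j s a (fun t => x t j) (a s j) else 1) *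
     (if h2 : (s : ℕ) + 1 < mk ∧ (s : ℕ) + 1 < T then
        ∏ j, Qk j ⟨(s : ℕ) + 1, h2.2⟩ (x s j) (a s) (x ⟨(s : ℕ) + 1, h2.2⟩ j) else 1))

/-- The constraint set at pinning level `m`. -/
def ConsP (i : Fin N) (τ : Fin T) (a0 : Fin T → ∀ j, A j) (xiv : X i) (ai : A i)
    (xd : Fin T → ∀ j, X j) (ad : Fin T → ∀ j, A j) (m : ℕ)
    (x : Fin T → ∀ j, X j) (a : Fin T → ∀ j, A j) : Prop :=
  (∀ s : Fin T, (s : ℕ) < (τ : ℕ) → a s = a0 s) ∧ x τ i = xiv ∧ a τ i = ai ∧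
  (∀ s : Fin T, m ≤ (s : ℕ) → x s = xd s) ∧ (∀ s : Fin T, m ≤ (s : ℕ) → a s = ad s)

/-- Partially marginalized numerator, with times `≥ m` pinned to defaults. -/
def Ssum (g : Strat N T X A) (i : Fin N) (τ : Fin T) (a0 : Fin T → ∀ j, A j)
    (xiv : X i) (ai : A i) (xd : Fin T → ∀ j, X j) (ad : Fin T → ∀ j, A j) (m : ℕ) : ℝ :=
  ∑ x : Fin T → ∀ j, X j, ∑ a : Fin T → ∀ j, A j,
    if ConsP N T X A i τ a0 xiv ai xd ad m x a
    then Wt N T X A Q1 Qk g m m x a else 0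

lemma trajP_eq_Wt (g : Strat N T X A) (x : Fin T → ∀ j, X j) (a : Fin T → ∀ j, A j) :
    trajP N T X A Q1 Qk g x a = Wt N T X A Q1 Qk g T T x a := by
  unfold trajP Wt
  congr 1
  apply Finset.prod_congr rfl
  intro s _
  congr 1
  · rw [if_pos s.isLt]
  · by_cases h : (s : ℕ) + 1 < T
    · simp [h]
    · simp [h]

lemma Wt_congr (g : Strat N T X A) (hc : Causal N T X A g) (mg mk : ℕ)
    (hgm : mg ≤ mk) (hmk : mk ≤ mg + 1) (h0 : 0 < mk)
    {x x' : Fin T → ∀ j, X j} {a a' : Fin T → ∀ j, A j}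
    (hx : ∀ s : Fin T, (s : ℕ) < mk → x s = x' s)
    (ha : ∀ s : Fin T, (s : ℕ) < mg → a s = a' s) :
    Wt N T X A Q1 Qk g mg mk x a = Wt N T X A Q1 Qk g mg mk x' a' := by
  unfold Wt
  congr 1
  · by_cases h : 0 < T
    · rw [dif_pos h, dif_pos h, hx ⟨0, h⟩ h0]
    · rw [dif_neg h, dif_neg h]
  · apply Finset.prod_congr rfl
    intro s _
    congr 1
    · by_cases hs : (s : ℕ) < mg
      · rw [if_pos hs, if_pos hs]
        apply Finset.prod_congr rfl
        intro j _
        rw [hc j s a a' (fun t => x t j) (fun t => x' t j)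
          (fun t ht => ha t (lt_trans ht hs))
          (fun t ht => congrFun (hx t (lt_of_le_of_lt ht (lt_of_lt_of_le hs hgm))) j),
          show a s j = a' s j from congrFun (ha s hs) j]
      · rw [if_neg hs, if_neg hs]
    · by_cases hs : (s : ℕ) + 1 < mk ∧ (s : ℕ) + 1 < T
      · rw [dif_pos hs, dif_pos hs]
        apply Finset.prod_congr rfl
        intro j _
        rw [hx s (by omega), hx ⟨(s : ℕ) + 1, hs.2⟩ hs.1, ha s (by omega)]
      · rw [dif_neg hs, dif_neg hs]

lemma Wt_succ_G (g : Strat N T X A) (m mk : ℕ) (hm : m < T)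
    (x : Fin T → ∀ j, X j) (a : Fin T → ∀ j, A j) :
    Wt N T X A Q1 Qk g (m + 1) mk x a
      = Wt N T X A Q1 Qk g m mk x a *
        ∏ j, g j ⟨m, hm⟩ a (fun t => x t j) (a ⟨m, hm⟩ j) := by
  unfold Wt
  rw [mul_assoc]
  congr 1
  have key : ∀ s : Fin T,
      ((if (s : ℕ) < m + 1 then ∏ j, g j s a (fun t => x t j) (a s j) else 1) *
       (if h2 : (s : ℕ) + 1 < mk ∧ (s : ℕ) + 1 < T then
          ∏ j, Qk j ⟨(s : ℕ) + 1, h2.2⟩ (x s j) (a s) (x ⟨(s : ℕ) + 1, h2.2⟩ j) else 1))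
      = ((if (s : ℕ) < m then ∏ j, g j s a (fun t => x t j) (a s j) else 1) *
         (if h2 : (s : ℕ) + 1 < mk ∧ (s : ℕ) + 1 < T then
            ∏ j, Qk j ⟨(s : ℕ) + 1, h2.2⟩ (x s j) (a s) (x ⟨(s : ℕ) + 1, h2.2⟩ j) else 1)) *
        (if s = (⟨m, hm⟩ : Fin T) then
            ∏ j, g j ⟨m, hm⟩ a (fun t => x t j) (a ⟨m, hm⟩ j) else 1) := by
    intro s
    by_cases hs : s = (⟨m, hm⟩ : Fin T)
    · subst hs
      rw [if_pos rfl, if_pos (by omega : (m : ℕ) < m + 1), if_neg (by omega : ¬ (m : ℕ) < m)]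
      ring
    · have hv : (s : ℕ) ≠ m := fun h => hs (Fin.ext h)
      rw [if_neg hs, mul_one]
      congr 1
      by_cases h1 : (s : ℕ) < m
      · rw [if_pos h1, if_pos (by omega)]
      · rw [if_neg h1, if_neg (by omega)]
  rw [Finset.prod_congr rfl (fun s _ => key s), Finset.prod_mul_distrib,
    Finset.prod_ite_eq' Finset.univ (⟨m, hm⟩ : Fin T)
      (fun _ => ∏ j, g j ⟨m, hm⟩ a (fun t => x t j) (a ⟨m, hm⟩ j)),
    if_pos (Finset.mem_univ _)]

lemma Wt_succ_K (g : Strat N T X A) (mg p : ℕ) (hp : p + 1 < T)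
    (x : Fin T → ∀ j, X j) (a : Fin T → ∀ j, A j) :
    Wt N T X A Q1 Qk g mg (p + 1 + 1) x a
      = Wt N T X A Q1 Qk g mg (p + 1) x a *
        ∏ j, Qk j ⟨p + 1, hp⟩ (x ⟨p, by omega⟩ j) (a ⟨p, by omega⟩) (x ⟨p + 1, hp⟩ j) := by
  unfold Wt
  rw [mul_assoc]
  congr 1
  have key : ∀ s : Fin T,
      ((if (s : ℕ) < mg then ∏ j, g j s a (fun t => x t j) (a s j) else 1) *
       (if h2 : (s : ℕ) + 1 < p + 1 + 1 ∧ (s : ℕ) + 1 < T then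
          ∏ j, Qk j ⟨(s : ℕ) + 1, h2.2⟩ (x s j) (a s) (x ⟨(s : ℕ) + 1, h2.2⟩ j) else 1))
      = ((if (s : ℕ) < mg then ∏ j, g j s a (fun t => x t j) (a s j) else 1) *
         (if h2 : (s : ℕ) + 1 < p + 1 ∧ (s : ℕ) + 1 < T then
            ∏ j, Qk j ⟨(s : ℕ) + 1, h2.2⟩ (x s j) (a s) (x ⟨(s : ℕ) + 1, h2.2⟩ j) else 1)) *
        (if s = (⟨p, by omega⟩ : Fin T) then
            ∏ j, Qk j ⟨p + 1, hp⟩ (x ⟨p, by omega⟩ j) (a ⟨p, by omega⟩) (x ⟨p + 1, hp⟩ j)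
          else 1) := by
    intro s
    by_cases hs : s = (⟨p, by omega⟩ : Fin T)
    · subst hs
      rw [if_pos rfl,
        dif_pos (show (p : ℕ) + 1 < p + 1 + 1 ∧ (p : ℕ) + 1 < T from ⟨by omega, hp⟩),
        dif_neg (show ¬ ((p : ℕ) + 1 < p + 1 ∧ (p : ℕ) + 1 < T) from by omega)]
      ring
    · have hv : (s : ℕ) ≠ p := fun h => hs (Fin.ext h)
      rw [if_neg hs, mul_one]
      congr 1
      by_cases h1 : (s : ℕ) + 1 < p + 1 ∧ (s : ℕ) + 1 < T
      · rw [dif_pos h1, dif_pos ⟨by omega, h1.2⟩]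
      · rw [dif_neg h1, dif_neg (by omega)]
  rw [Finset.prod_congr rfl (fun s _ => key s), Finset.prod_mul_distrib,
    Finset.prod_ite_eq' Finset.univ (⟨p, by omega⟩ : Fin T) _, if_pos (Finset.mem_univ _)]
lemma fin_ne_mk {n : ℕ} (s : Fin n) (m : ℕ) (h : m < n) (hv : (s : ℕ) ≠ m) :
    s ≠ ⟨m, h⟩ := fun hh => hv (by rw [hh])

lemma Ssum_step (g : Strat N T X A)
    (hK : StochKer N T X A Q1 Qk) (hg : Stochastic N T X A g) (hc : Causal N T X A g)
    (i : Fin N) (τ : Fin T) (a0 : Fin T → ∀ j, A j) (xiv : X i) (ai : A i)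
    (xd : Fin T → ∀ j, X j) (ad : Fin T → ∀ j, A j) (p : ℕ)
    (hτ : (τ : ℕ) ≤ p) (hpT : p + 1 < T) :
    Ssum N T X A Q1 Qk g i τ a0 xiv ai xd ad (p + 1 + 1)
      = Ssum N T X A Q1 Qk g i τ a0 xiv ai xd ad (p + 1) := by
  have hpT' : p < T := by omega
  have hτne : (τ : Fin T) ≠ ⟨p + 1, hpT⟩ := fin_ne_mk τ (p+1) hpT (by omega)
  have hpne : (⟨p, hpT'⟩ : Fin T) ≠ ⟨p + 1, hpT⟩ := fin_ne_mk ⟨p, hpT'⟩ (p+1) hpT (show p ≠ p+1 by omega)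
  -- the key pointwise elimination of period `p+1`
  have key : ∀ (x : Fin T → ∀ j, X j) (a : Fin T → ∀ j, A j),
      x ⟨p + 1, hpT⟩ = xd ⟨p + 1, hpT⟩ → a ⟨p + 1, hpT⟩ = ad ⟨p + 1, hpT⟩ →
      (∑ w : ∀ j, X j, ∑ v : ∀ j, A j,
        (if ConsP N T X A i τ a0 xiv ai xd ad (p + 1 + 1)
              (Function.update x ⟨p + 1, hpT⟩ w) (Function.update a ⟨p + 1, hpT⟩ v)
         then Wt N T X A Q1 Qk g (p + 1 + 1) (p + 1 + 1)
              (Function.update x ⟨p + 1, hpT⟩ w) (Function.update a ⟨p + 1, hpT⟩ v) else 0))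
      = (if ConsP N T X A i τ a0 xiv ai xd ad (p + 1) x a
         then Wt N T X A Q1 Qk g (p + 1) (p + 1) x a else 0) := by
    intro x a hx ha
    have hcons : ∀ (w : ∀ j, X j) (v : ∀ j, A j),
        ConsP N T X A i τ a0 xiv ai xd ad (p + 1 + 1)
          (Function.update x ⟨p + 1, hpT⟩ w) (Function.update a ⟨p + 1, hpT⟩ v)
        ↔ ConsP N T X A i τ a0 xiv ai xd ad (p + 1) x a := by
      intro w v
      unfold ConsP
      constructor
      · rintro ⟨h1, h2, h3, h4, h5⟩
        refine ⟨?_, ?_, ?_, ?_, ?_⟩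
        · intro s hs
          have hne : s ≠ ⟨p + 1, hpT⟩ := fin_ne_mk s (p+1) hpT (by omega)
          rw [← Function.update_of_ne hne v a]; exact h1 s hs
        · rw [← Function.update_of_ne hτne w x]; exact h2
        · rw [← Function.update_of_ne hτne v a]; exact h3
        · intro s hs
          by_cases hsm : s = ⟨p + 1, hpT⟩
          · subst hsm; exact hx
          · have hv : (s : ℕ) ≠ p + 1 := fun hh => hsm (Fin.ext hh)
            have hs' : p + 1 + 1 ≤ (s : ℕ) := by omega
            rw [← Function.update_of_ne hsm w x]; exact h4 s hs'
        · intro s hs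
          by_cases hsm : s = ⟨p + 1, hpT⟩
          · subst hsm; exact ha
          · have hv : (s : ℕ) ≠ p + 1 := fun hh => hsm (Fin.ext hh)
            have hs' : p + 1 + 1 ≤ (s : ℕ) := by omega
            rw [← Function.update_of_ne hsm v a]; exact h5 s hs'
      · rintro ⟨h1, h2, h3, h4, h5⟩
        refine ⟨?_, ?_, ?_, ?_, ?_⟩
        · intro s hs
          have hne : s ≠ ⟨p + 1, hpT⟩ := fin_ne_mk s (p+1) hpT (by omega)
          rw [Function.update_of_ne hne v a]; exact h1 s hs
        · rw [Function.update_of_ne hτne w x]; exact h2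
        · rw [Function.update_of_ne hτne v a]; exact h3
        · intro s hs
          have hne : s ≠ ⟨p + 1, hpT⟩ := fin_ne_mk s (p+1) hpT (by omega)
          rw [Function.update_of_ne hne w x]; exact h4 s (by omega)
        · intro s hs
          have hne : s ≠ ⟨p + 1, hpT⟩ := fin_ne_mk s (p+1) hpT (by omega)
          rw [Function.update_of_ne hne v a]; exact h5 s (by omega)
    by_cases hC : ConsP N T X A i τ a0 xiv ai xd ad (p + 1) x a
    · simp only [hcons, if_pos hC]
      have hsplit : ∀ (w : ∀ j, X j) (v : ∀ j, A j),
          Wt N T X A Q1 Qk g (p + 1 + 1) (p + 1 + 1)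
            (Function.update x ⟨p + 1, hpT⟩ w) (Function.update a ⟨p + 1, hpT⟩ v)
          = Wt N T X A Q1 Qk g (p + 1) (p + 1) x a *
            ((∏ j, Qk j ⟨p + 1, hpT⟩ (x ⟨p, hpT'⟩ j) (a ⟨p, hpT'⟩) (w j)) *
             (∏ j, g j ⟨p + 1, hpT⟩ a
                (fun t => Function.update x ⟨p + 1, hpT⟩ w t j) (v j))) := by
        intro w v
        rw [Wt_succ_G N T X A Q1 Qk g (p + 1) (p + 1 + 1) hpT]
        rw [Wt_succ_K N T X A Q1 Qk g (p + 1) p hpT]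
        have e1 : Wt N T X A Q1 Qk g (p + 1) (p + 1)
            (Function.update x ⟨p + 1, hpT⟩ w) (Function.update a ⟨p + 1, hpT⟩ v)
            = Wt N T X A Q1 Qk g (p + 1) (p + 1) x a := by
          apply Wt_congr N T X A Q1 Qk g hc (p + 1) (p + 1) le_rfl (by omega) (by omega)
          · intro s hs
            have hne : s ≠ (⟨p + 1, hpT⟩ : Fin T) := fin_ne_mk s (p+1) hpT (by omega)
            exact Function.update_of_ne hne w x
          · intro s hs
            have hne : s ≠ (⟨p + 1, hpT⟩ : Fin T) := fin_ne_mk s (p+1) hpT (by omega)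
            exact Function.update_of_ne hne v a
        have e2 : (∏ j, Qk j ⟨p + 1, hpT⟩
              (Function.update x ⟨p + 1, hpT⟩ w ⟨p, hpT'⟩ j)
              (Function.update a ⟨p + 1, hpT⟩ v ⟨p, hpT'⟩)
              (Function.update x ⟨p + 1, hpT⟩ w ⟨p + 1, hpT⟩ j))
            = ∏ j, Qk j ⟨p + 1, hpT⟩ (x ⟨p, hpT'⟩ j) (a ⟨p, hpT'⟩) (w j) := by
          apply Finset.prod_congr rfl
          intro j _
          rw [Function.update_of_ne hpne w x, Function.update_of_ne hpne v a,
            Function.update_self]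
        have e3 : (∏ j, g j ⟨p + 1, hpT⟩ (Function.update a ⟨p + 1, hpT⟩ v)
              (fun t => Function.update x ⟨p + 1, hpT⟩ w t j)
              (Function.update a ⟨p + 1, hpT⟩ v ⟨p + 1, hpT⟩ j))
            = ∏ j, g j ⟨p + 1, hpT⟩ a
              (fun t => Function.update x ⟨p + 1, hpT⟩ w t j) (v j) := by
          apply Finset.prod_congr rfl
          intro j _
          rw [Function.update_self]
          exact congrFun (hc j ⟨p + 1, hpT⟩ _ a _ _
            (fun s hs => by
              have hs' : (s : ℕ) < p + 1 := hs
              have hne : s ≠ (⟨p + 1, hpT⟩ : Fin T) := fin_ne_mk s (p+1) hpT (by omega)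
              exact Function.update_of_ne hne v a)
            (fun s hs => rfl)) (v j)
        rw [e1, e2, e3, mul_assoc]
      rw [Finset.sum_congr rfl (fun w _ => Finset.sum_congr rfl (fun v _ => hsplit w v))]
      have hg1 : ∀ w : ∀ j, X j,
          (∑ v : ∀ j, A j, ∏ j, g j ⟨p + 1, hpT⟩ a
            (fun t => Function.update x ⟨p + 1, hpT⟩ w t j) (v j)) = 1 := by
        intro w
        rw [← Fintype.piFinset_univ, ← Finset.prod_univ_sum,
          Finset.prod_congr rfl (fun j _ => (hg j ⟨p + 1, hpT⟩ a _).2),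
          Finset.prod_const_one]
      have hk1 : (∑ w : ∀ j, X j,
          ∏ j, Qk j ⟨p + 1, hpT⟩ (x ⟨p, hpT'⟩ j) (a ⟨p, hpT'⟩) (w j)) = 1 := by
        rw [← Fintype.piFinset_univ, ← Finset.prod_univ_sum,
          Finset.prod_congr rfl (fun j _ => (hK.2 j ⟨p + 1, hpT⟩ (x ⟨p, hpT'⟩ j) (a ⟨p, hpT'⟩)).2),
          Finset.prod_const_one]
      have hsw : ∀ w : ∀ j, X j,
          (∑ v : ∀ j, A j, Wt N T X A Q1 Qk g (p + 1) (p + 1) x a *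
            ((∏ j, Qk j ⟨p + 1, hpT⟩ (x ⟨p, hpT'⟩ j) (a ⟨p, hpT'⟩) (w j)) *
             (∏ j, g j ⟨p + 1, hpT⟩ a (fun t => Function.update x ⟨p + 1, hpT⟩ w t j) (v j))))
          = Wt N T X A Q1 Qk g (p + 1) (p + 1) x a *
            (∏ j, Qk j ⟨p + 1, hpT⟩ (x ⟨p, hpT'⟩ j) (a ⟨p, hpT'⟩) (w j)) := by
        intro w
        simp only [← mul_assoc]
        rw [← Finset.mul_sum, hg1 w, mul_one]
      rw [Finset.sum_congr rfl (fun w _ => hsw w), ← Finset.mul_sum, hk1, mul_one]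
    · rw [if_neg hC]
      apply Finset.sum_eq_zero
      intro w _
      apply Finset.sum_eq_zero
      intro v _
      exact if_neg (fun h => hC ((hcons w v).mp h))
  -- orchestration
  unfold Ssum
  rw [sum_fiber (β := fun _ : Fin T => ∀ j, X j) (⟨p + 1, hpT⟩ : Fin T) (xd ⟨p + 1, hpT⟩)
    (fun x => ∑ a, if ConsP N T X A i τ a0 xiv ai xd ad (p + 1 + 1) x a
      then Wt N T X A Q1 Qk g (p + 1 + 1) (p + 1 + 1) x a else 0)]
  apply Finset.sum_congr rfl
  intro x _
  by_cases hx : x ⟨p + 1, hpT⟩ = xd ⟨p + 1, hpT⟩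
  · rw [if_pos hx]
    rw [Finset.sum_congr rfl (fun (w : ∀ j, X j) (_ : w ∈ Finset.univ) =>
      sum_fiber (β := fun _ : Fin T => ∀ j, A j) (⟨p + 1, hpT⟩ : Fin T) (ad ⟨p + 1, hpT⟩)
        (fun a' => if ConsP N T X A i τ a0 xiv ai xd ad (p + 1 + 1)
            (Function.update x ⟨p + 1, hpT⟩ w) a'
          then Wt N T X A Q1 Qk g (p + 1 + 1) (p + 1 + 1)
            (Function.update x ⟨p + 1, hpT⟩ w) a' else 0)), Finset.sum_comm]
    apply Finset.sum_congr rfl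
    intro a _
    by_cases ha : a ⟨p + 1, hpT⟩ = ad ⟨p + 1, hpT⟩
    · simp only [if_pos ha]
      exact key x a hx ha
    · simp only [if_neg ha, Finset.sum_const_zero]
      symm
      exact if_neg (fun h => ha (h.2.2.2.2 ⟨p + 1, hpT⟩ (Nat.le_refl _)))
  · rw [if_neg hx]
    symm
    apply Finset.sum_eq_zero
    intro a _
    exact if_neg (fun h => hx (h.2.2.2.1 ⟨p + 1, hpT⟩ (Nat.le_refl _)))
lemma Wt_eq_prod_pfac (g : Strat N T X A) (τ : Fin T)
    (x : Fin T → ∀ j, X j) (a0 : Fin T → ∀ j, A j) :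
    Wt N T X A Q1 Qk g (τ : ℕ) ((τ : ℕ) + 1) x a0
      = ∏ j, pfac N T X A Q1 Qk g j τ (fun t => x t j) a0 := by
  unfold Wt pfac
  symm
  rw [Finset.prod_mul_distrib]
  congr 1
  · by_cases h : 0 < T <;> simp [h]
  · rw [Finset.prod_comm]
    apply Finset.prod_congr rfl
    intro s _
    rw [Finset.prod_mul_distrib]
    congr 1
    · by_cases h : (s : ℕ) < (τ : ℕ) <;> simp [h]
    · by_cases h : (s : ℕ) + 1 ≤ (τ : ℕ) ∧ (s : ℕ) + 1 < T
      · simp only [dif_pos h,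
          dif_pos (show (s : ℕ) + 1 < (τ : ℕ) + 1 ∧ (s : ℕ) + 1 < T from ⟨by omega, h.2⟩)]
      · simp only [dif_neg h, dif_neg (show ¬ ((s : ℕ) + 1 < (τ : ℕ) + 1 ∧ (s : ℕ) + 1 < T)
          from by omega), Finset.prod_const_one]

lemma Ssum_tau (g : Strat N T X A)
    (hK : StochKer N T X A Q1 Qk) (hg : Stochastic N T X A g) (hc : Causal N T X A g)
    (i : Fin N) (τ : Fin T) (a0 : Fin T → ∀ j, A j) (xiv : X i) (ai : A i)
    (xd : Fin T → ∀ j, X j) (ad : Fin T → ∀ j, A j) :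
    Ssum N T X A Q1 Qk g i τ a0 xiv ai xd ad ((τ : ℕ) + 1)
      = (∑ z : Fin T → X i,
          if ((∀ s : Fin T, (τ : ℕ) + 1 ≤ (s : ℕ) → z s = xd s i) ∧ z τ = xiv)
          then pfac N T X A Q1 Qk g i τ z a0 * g i τ a0 z ai else 0) *
        (∏ j ∈ Finset.univ.erase i, ∑ z : Fin T → X j,
          if (∀ s : Fin T, (τ : ℕ) + 1 ≤ (s : ℕ) → z s = xd s j)
          then pfac N T X A Q1 Qk g j τ z a0 else 0) := by
  classical
  have hτT : (τ : ℕ) < T := τ.isLt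
  unfold Ssum
  rw [Finset.sum_congr rfl (fun (x : Fin T → ∀ j, X j) (_ : x ∈ Finset.univ) =>
    sum_fiber (β := fun _ : Fin T => ∀ j, A j) τ (ad τ)
      (fun a' => if ConsP N T X A i τ a0 xiv ai xd ad ((τ : ℕ) + 1) x a'
        then Wt N T X A Q1 Qk g ((τ : ℕ) + 1) ((τ : ℕ) + 1) x a' else 0))]
  -- step 1: eliminate the period-τ action profile
  have key1 : ∀ (x : Fin T → ∀ j, X j) (a : Fin T → ∀ j, A j),
      (∑ v : ∀ j, A j,
        if ConsP N T X A i τ a0 xiv ai xd ad ((τ : ℕ) + 1) x (Function.update a τ v)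
        then Wt N T X A Q1 Qk g ((τ : ℕ) + 1) ((τ : ℕ) + 1) x (Function.update a τ v) else 0)
      = if ((∀ s : Fin T, (s : ℕ) < (τ : ℕ) → a s = a0 s) ∧
            (∀ s : Fin T, (τ : ℕ) + 1 ≤ (s : ℕ) → a s = ad s) ∧
            x τ i = xiv ∧ (∀ s : Fin T, (τ : ℕ) + 1 ≤ (s : ℕ) → x s = xd s))
        then Wt N T X A Q1 Qk g (τ : ℕ) ((τ : ℕ) + 1) x a0 *
          g i τ a0 (fun t => x t i) ai else 0 := by
    intro x a
    have hcv : ∀ v : ∀ j, A j,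
        ConsP N T X A i τ a0 xiv ai xd ad ((τ : ℕ) + 1) x (Function.update a τ v)
        ↔ (((∀ s : Fin T, (s : ℕ) < (τ : ℕ) → a s = a0 s) ∧
            (∀ s : Fin T, (τ : ℕ) + 1 ≤ (s : ℕ) → a s = ad s) ∧
            x τ i = xiv ∧ (∀ s : Fin T, (τ : ℕ) + 1 ≤ (s : ℕ) → x s = xd s)) ∧ v i = ai) := by
      intro v
      unfold ConsP
      constructor
      · rintro ⟨h1, h2, h3, h4, h5⟩
        rw [Function.update_self] at h3
        refine ⟨⟨?_, ?_, h2, h4⟩, h3⟩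
        · intro s hs
          have hne : s ≠ τ := Fin.ne_of_val_ne (by omega)
          rw [← Function.update_of_ne hne v a]; exact h1 s hs
        · intro s hs
          have hne : s ≠ τ := Fin.ne_of_val_ne (by omega)
          rw [← Function.update_of_ne hne v a]; exact h5 s hs
      · rintro ⟨⟨h1, h5, h2, h4⟩, h3⟩
        refine ⟨?_, h2, ?_, h4, ?_⟩
        · intro s hs
          have hne : s ≠ τ := Fin.ne_of_val_ne (by omega)
          rw [Function.update_of_ne hne v a]; exact h1 s hs
        · rw [Function.update_self]; exact h3
        · intro s hs
          have hne : s ≠ τ := Fin.ne_of_val_ne (by omega)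
          rw [Function.update_of_ne hne v a]; exact h5 s hs
    by_cases hCC : ((∀ s : Fin T, (s : ℕ) < (τ : ℕ) → a s = a0 s) ∧
        (∀ s : Fin T, (τ : ℕ) + 1 ≤ (s : ℕ) → a s = ad s) ∧
        x τ i = xiv ∧ (∀ s : Fin T, (τ : ℕ) + 1 ≤ (s : ℕ) → x s = xd s))
    · have hterm : ∀ v : ∀ j, A j,
          (if ConsP N T X A i τ a0 xiv ai xd ad ((τ : ℕ) + 1) x (Function.update a τ v)
           then Wt N T X A Q1 Qk g ((τ : ℕ) + 1) ((τ : ℕ) + 1) x (Function.update a τ v) else 0)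
          = Wt N T X A Q1 Qk g (τ : ℕ) ((τ : ℕ) + 1) x a0 *
              (if v i = ai then ∏ j, g j τ a0 (fun t => x t j) (v j) else 0) := by
        intro v
        by_cases hv : v i = ai
        · rw [if_pos ((hcv v).mpr ⟨hCC, hv⟩), if_pos hv]
          have hG := Wt_succ_G N T X A Q1 Qk g (τ : ℕ) ((τ : ℕ) + 1) hτT x
            (Function.update a τ v)
          simp only [Fin.eta] at hG
          rw [hG]
          have e1 : Wt N T X A Q1 Qk g (τ : ℕ) ((τ : ℕ) + 1) x (Function.update a τ v)
              = Wt N T X A Q1 Qk g (τ : ℕ) ((τ : ℕ) + 1) x a0 := by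
            apply Wt_congr N T X A Q1 Qk g hc (τ : ℕ) ((τ : ℕ) + 1)
              (by omega) (by omega) (by omega) (fun s _ => rfl)
            intro s hs
            have hne : s ≠ τ := Fin.ne_of_val_ne (by omega)
            rw [Function.update_of_ne hne v a]; exact hCC.1 s hs
          have e2 : (∏ j, g j τ (Function.update a τ v) (fun t => x t j)
                (Function.update a τ v τ j))
              = ∏ j, g j τ a0 (fun t => x t j) (v j) := by
            apply Finset.prod_congr rfl
            intro j _
            rw [Function.update_self]
            refine congrFun (hc j τ _ a0 _ _ ?_ (fun _ _ => rfl)) (v j)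
            intro s hs
            have hne : s ≠ τ := Fin.ne_of_val_ne (by omega)
            rw [Function.update_of_ne hne v a]; exact hCC.1 s hs
          rw [e1, e2]
        · rw [if_neg (fun h => hv ((hcv v).mp h).2), if_neg hv, mul_zero]
      rw [Finset.sum_congr rfl (fun v _ => hterm v), ← Finset.mul_sum,
        sum_pin_prod i ai (fun j b => g j τ a0 (fun t => x t j) b)
          (fun j _ => (hg j τ a0 (fun t => x t j)).2), if_pos hCC]
    · rw [if_neg hCC]
      apply Finset.sum_eq_zero
      intro v _
      exact if_neg (fun h => hCC ((hcv v).mp h).1)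
  -- step 2: collapse the action-history sum
  have key2 : ∀ x : Fin T → ∀ j, X j,
      (∑ a : Fin T → ∀ j, A j, if a τ = ad τ then
        (∑ v : ∀ j, A j,
          if ConsP N T X A i τ a0 xiv ai xd ad ((τ : ℕ) + 1) x (Function.update a τ v)
          then Wt N T X A Q1 Qk g ((τ : ℕ) + 1) ((τ : ℕ) + 1) x (Function.update a τ v) else 0)
        else 0)
      = if (x τ i = xiv ∧ (∀ s : Fin T, (τ : ℕ) + 1 ≤ (s : ℕ) → x s = xd s))
        then Wt N T X A Q1 Qk g (τ : ℕ) ((τ : ℕ) + 1) x a0 *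
          g i τ a0 (fun t => x t i) ai else 0 := by
    intro x
    have hterm : ∀ a : Fin T → ∀ j, A j,
        (if a τ = ad τ then
          (∑ v : ∀ j, A j,
            if ConsP N T X A i τ a0 xiv ai xd ad ((τ : ℕ) + 1) x (Function.update a τ v)
            then Wt N T X A Q1 Qk g ((τ : ℕ) + 1) ((τ : ℕ) + 1) x (Function.update a τ v) else 0)
          else 0)
        = if (a = (fun s : Fin T => if (s : ℕ) < (τ : ℕ) then a0 s else ad s) ∧
              (x τ i = xiv ∧ (∀ s : Fin T, (τ : ℕ) + 1 ≤ (s : ℕ) → x s = xd s)))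
          then Wt N T X A Q1 Qk g (τ : ℕ) ((τ : ℕ) + 1) x a0 *
            g i τ a0 (fun t => x t i) ai else 0 := by
      intro a
      by_cases ha : a τ = ad τ
      · rw [if_pos ha, key1 x a]
        apply if_congr ?_ rfl rfl
        constructor
        · rintro ⟨h1, h5, h2, h4⟩
          refine ⟨?_, h2, h4⟩
          funext s
          by_cases hs : (s : ℕ) < (τ : ℕ)
          · rw [if_pos hs]; exact h1 s hs
          · rw [if_neg hs]
            by_cases hsτ : (s : ℕ) = (τ : ℕ)
            · have : s = τ := Fin.ext hsτ
              rw [this]; exact ha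
            · exact h5 s (by omega)
        · rintro ⟨hA, h2, h4⟩
          subst hA
          refine ⟨fun s hs => if_pos hs, fun s hs => if_neg (by omega), h2, h4⟩
      · rw [if_neg ha]
        symm
        apply if_neg
        rintro ⟨hA, -⟩
        apply ha
        rw [hA]
        exact if_neg (by omega)
    rw [Finset.sum_congr rfl (fun a _ => hterm a)]
    by_cases hX : (x τ i = xiv ∧ (∀ s : Fin T, (τ : ℕ) + 1 ≤ (s : ℕ) → x s = xd s))
    · have hsimp : ∀ a : Fin T → ∀ j, A j,
          (if (a = (fun s : Fin T => if (s : ℕ) < (τ : ℕ) then a0 s else ad s) ∧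
              (x τ i = xiv ∧ (∀ s : Fin T, (τ : ℕ) + 1 ≤ (s : ℕ) → x s = xd s)))
            then Wt N T X A Q1 Qk g (τ : ℕ) ((τ : ℕ) + 1) x a0 *
              g i τ a0 (fun t => x t i) ai else 0)
          = if a = (fun s : Fin T => if (s : ℕ) < (τ : ℕ) then a0 s else ad s)
            then Wt N T X A Q1 Qk g (τ : ℕ) ((τ : ℕ) + 1) x a0 *
              g i τ a0 (fun t => x t i) ai else 0 :=
        fun a => if_congr (and_iff_left hX) rfl rfl
      rw [Finset.sum_congr rfl (fun a _ => hsimp a),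
        Finset.sum_ite_eq' Finset.univ
          (fun s : Fin T => if (s : ℕ) < (τ : ℕ) then a0 s else ad s)
          (fun _ => Wt N T X A Q1 Qk g (τ : ℕ) ((τ : ℕ) + 1) x a0 *
            g i τ a0 (fun t => x t i) ai),
        if_pos (Finset.mem_univ _), if_pos hX]
    · rw [if_neg hX]
      apply Finset.sum_eq_zero
      intro a _
      exact if_neg (fun h => hX h.2)
  rw [Finset.sum_congr rfl (fun x _ => key2 x)]
  -- step 3: factor across players
  have key3 : ∀ x : Fin T → ∀ j, X j,
      (if (x τ i = xiv ∧ (∀ s : Fin T, (τ : ℕ) + 1 ≤ (s : ℕ) → x s = xd s))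
        then Wt N T X A Q1 Qk g (τ : ℕ) ((τ : ℕ) + 1) x a0 *
          g i τ a0 (fun t => x t i) ai else 0)
      = ∏ j, Function.update
          (fun (j : Fin N) (z : Fin T → X j) =>
            if (∀ s : Fin T, (τ : ℕ) + 1 ≤ (s : ℕ) → z s = xd s j)
            then pfac N T X A Q1 Qk g j τ z a0 else 0) i
          (fun z => if ((∀ s : Fin T, (τ : ℕ) + 1 ≤ (s : ℕ) → z s = xd s i) ∧ z τ = xiv)
            then pfac N T X A Q1 Qk g i τ z a0 * g i τ a0 z ai else 0)
          j (fun t => x t j) := by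
    intro x
    by_cases hx : (x τ i = xiv ∧ (∀ s : Fin T, (τ : ℕ) + 1 ≤ (s : ℕ) → x s = xd s))
    · rw [if_pos hx]
      have hj : ∀ j : Fin N, Function.update
          (fun (j : Fin N) (z : Fin T → X j) =>
            if (∀ s : Fin T, (τ : ℕ) + 1 ≤ (s : ℕ) → z s = xd s j)
            then pfac N T X A Q1 Qk g j τ z a0 else 0) i
          (fun z => if ((∀ s : Fin T, (τ : ℕ) + 1 ≤ (s : ℕ) → z s = xd s i) ∧ z τ = xiv)
            then pfac N T X A Q1 Qk g i τ z a0 * g i τ a0 z ai else 0)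
          j (fun t => x t j)
          = pfac N T X A Q1 Qk g j τ (fun t => x t j) a0 *
            (if j = i then g i τ a0 (fun t => x t i) ai else 1) := by
        intro j
        by_cases hji : j = i
        · subst hji
          rw [Function.update_self, if_pos rfl,
            if_pos ⟨fun s hs => congrFun (hx.2 s hs) j, hx.1⟩]
        · rw [Function.update_of_ne hji, if_neg hji, mul_one,
            if_pos (fun s hs => congrFun (hx.2 s hs) j)]
      rw [Finset.prod_congr rfl (fun j _ => hj j), Finset.prod_mul_distrib,
        Finset.prod_ite_eq' Finset.univ i (fun _ => g i τ a0 (fun t => x t i) ai),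
        if_pos (Finset.mem_univ _), ← Wt_eq_prod_pfac]
    · rw [if_neg hx]
      symm
      by_cases h1 : x τ i = xiv
      · have h2 : ¬ ∀ s : Fin T, (τ : ℕ) + 1 ≤ (s : ℕ) → x s = xd s :=
          fun h => hx ⟨h1, h⟩
        push_neg at h2
        obtain ⟨s, hs, hneq⟩ := h2
        obtain ⟨j, hj⟩ := Function.ne_iff.mp hneq
        apply Finset.prod_eq_zero (Finset.mem_univ j)
        by_cases hji : j = i
        · subst hji
          rw [Function.update_self]
          exact if_neg (fun h => hj (h.1 s hs))
        · rw [Function.update_of_ne hji]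
          exact if_neg (fun h => hj (h s hs))
      · apply Finset.prod_eq_zero (Finset.mem_univ i)
        rw [Function.update_self]
        exact if_neg (fun h => h1 h.2)
  rw [Finset.sum_congr rfl (fun x _ => key3 x)]
  rw [show (∑ x : Fin T → ∀ j, X j, ∏ j, Function.update
        (fun (j : Fin N) (z : Fin T → X j) =>
          if (∀ s : Fin T, (τ : ℕ) + 1 ≤ (s : ℕ) → z s = xd s j)
          then pfac N T X A Q1 Qk g j τ z a0 else 0) i
        (fun z => if ((∀ s : Fin T, (τ : ℕ) + 1 ≤ (s : ℕ) → z s = xd s i) ∧ z τ = xiv)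
          then pfac N T X A Q1 Qk g i τ z a0 * g i τ a0 z ai else 0)
        j (fun t => x t j))
      = ∑ y : ∀ j, Fin T → X j, ∏ j, Function.update
        (fun (j : Fin N) (z : Fin T → X j) =>
          if (∀ s : Fin T, (τ : ℕ) + 1 ≤ (s : ℕ) → z s = xd s j)
          then pfac N T X A Q1 Qk g j τ z a0 else 0) i
        (fun z => if ((∀ s : Fin T, (τ : ℕ) + 1 ≤ (s : ℕ) → z s = xd s i) ∧ z τ = xiv)
          then pfac N T X A Q1 Qk g i τ z a0 * g i τ a0 z ai else 0)
        j (y j)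
    from Fintype.sum_equiv (Equiv.piComm fun (_ : Fin T) (j : Fin N) => X j) _ _
      (fun x => rfl)]
  rw [← Fintype.piFinset_univ, ← Finset.prod_univ_sum,
    ← Finset.mul_prod_erase Finset.univ _ (Finset.mem_univ i)]
  congr 1
  · apply Finset.sum_congr rfl
    intro z _
    rw [Function.update_self]
  · apply Finset.prod_congr rfl
    intro j hj
    have hji : j ≠ i := (Finset.mem_erase.mp hj).1
    apply Finset.sum_congr rfl
    intro z _
    rw [Function.update_of_ne hji]
lemma sNum_eq_SsumT (g : Strat N T X A) (i : Fin N) (τ : Fin T)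
    (a0 : Fin T → ∀ j, A j) (xiv : X i) (ai : A i)
    (xd : Fin T → ∀ j, X j) (ad : Fin T → ∀ j, A j) :
    sNum N T X A Q1 Qk g i τ a0 xiv ai = Ssum N T X A Q1 Qk g i τ a0 xiv ai xd ad T := by
  unfold sNum Ssum
  apply Finset.sum_congr rfl
  intro x _
  apply Finset.sum_congr rfl
  intro a _
  rw [trajP_eq_Wt N T X A Q1 Qk g x a]
  apply if_congr ?_ rfl rfl
  unfold ConsP
  constructor
  · rintro ⟨h1, h2, h3⟩
    exact ⟨h1, h2, h3, fun s hs => absurd s.isLt (by omega),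
      fun s hs => absurd s.isLt (by omega)⟩
  · rintro ⟨h1, h2, h3, -, -⟩
    exact ⟨h1, h2, h3⟩

lemma SsumT_eq_Ssum_tau (g : Strat N T X A)
    (hK : StochKer N T X A Q1 Qk) (hg : Stochastic N T X A g) (hc : Causal N T X A g)
    (i : Fin N) (τ : Fin T) (a0 : Fin T → ∀ j, A j) (xiv : X i) (ai : A i)
    (xd : Fin T → ∀ j, X j) (ad : Fin T → ∀ j, A j) :
    Ssum N T X A Q1 Qk g i τ a0 xiv ai xd ad T
      = Ssum N T X A Q1 Qk g i τ a0 xiv ai xd ad ((τ : ℕ) + 1) := by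
  suffices h : ∀ n, (τ : ℕ) + 1 ≤ n → n ≤ T →
      Ssum N T X A Q1 Qk g i τ a0 xiv ai xd ad n
        = Ssum N T X A Q1 Qk g i τ a0 xiv ai xd ad ((τ : ℕ) + 1) by
    exact h T (by have := τ.isLt; omega) le_rfl
  intro n
  induction n with
  | zero => intro h1 h2; omega
  | succ n ih =>
    intro h1 h2
    by_cases hn : (τ : ℕ) + 1 ≤ n
    · have hstep := Ssum_step N T X A Q1 Qk g hK hg hc i τ a0 xiv ai xd ad (n - 1)
        (by omega) (by omega : n - 1 + 1 < T)
      have e : n - 1 + 1 = n := by omega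
      rw [e] at hstep
      rw [hstep]
      exact ih hn (by omega)
    · have : n + 1 = (τ : ℕ) + 1 := by omega
      rw [this]

lemma pfac_congr (g : Strat N T X A) (hc : Causal N T X A g) (j : Fin N) (τ : Fin T)
    {z z' : Fin T → X j} (a0 : Fin T → ∀ k, A k)
    (hz : ∀ s : Fin T, (s : ℕ) ≤ (τ : ℕ) → z s = z' s) :
    pfac N T X A Q1 Qk g j τ z a0 = pfac N T X A Q1 Qk g j τ z' a0 := by
  unfold pfac
  congr 1
  · by_cases h : 0 < T
    · simp only [dif_pos h]
      rw [hz ⟨0, h⟩ (Nat.zero_le _)]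
    · simp only [dif_neg h]
  · apply Finset.prod_congr rfl
    intro s _
    congr 1
    · by_cases hs : (s : ℕ) < (τ : ℕ)
      · rw [if_pos hs, if_pos hs]
        exact congrFun (hc j s a0 a0 z z' (fun _ _ => rfl)
          (fun t ht => hz t (by omega))) (a0 s j)
      · rw [if_neg hs, if_neg hs]
    · by_cases h2 : (s : ℕ) + 1 ≤ (τ : ℕ) ∧ (s : ℕ) + 1 < T
      · simp only [dif_pos h2]
        rw [hz s (by omega), hz ⟨(s : ℕ) + 1, h2.2⟩ (by exact h2.1)]
      · simp only [dif_neg h2]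

lemma sDen_eq_sum_sNum (g : Strat N T X A) (i : Fin N) (τ : Fin T)
    (a0 : Fin T → ∀ j, A j) (xiv : X i) :
    sDen N T X A Q1 Qk g i τ a0 xiv
      = ∑ ai' : A i, sNum N T X A Q1 Qk g i τ a0 xiv ai' := by
  unfold sDen sNum
  symm
  rw [Finset.sum_comm]
  apply Finset.sum_congr rfl
  intro x _
  rw [Finset.sum_comm]
  apply Finset.sum_congr rfl
  intro a _
  by_cases hC : (∀ s : Fin T, (s : ℕ) < (τ : ℕ) → a s = a0 s) ∧ x τ i = xiv
  · rw [if_pos hC]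
    have hterm : ∀ ai' : A i,
        (if ((∀ s : Fin T, (s : ℕ) < (τ : ℕ) → a s = a0 s) ∧ x τ i = xiv ∧ a τ i = ai')
          then trajP N T X A Q1 Qk g x a else 0)
        = if a τ i = ai' then trajP N T X A Q1 Qk g x a else 0 :=
      fun ai' => if_congr ⟨fun h => h.2.2, fun h => ⟨hC.1, hC.2, h⟩⟩ rfl rfl
    rw [Finset.sum_congr rfl (fun ai' _ => hterm ai'), Finset.sum_ite_eq Finset.univ (a τ i)
      (fun _ => trajP N T X A Q1 Qk g x a), if_pos (Finset.mem_univ _)]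
  · rw [if_neg hC]
    apply Finset.sum_eq_zero
    intro ai' _
    exact if_neg (fun h => hC ⟨h.1, h.2.1⟩)

lemma Num_unpin (g : Strat N T X A) (hc : Causal N T X A g)
    (i : Fin N) (τ : Fin T) (a0 : Fin T → ∀ j, A j) (xiv : X i) (ai : A i)
    (xd : Fin T → ∀ j, X j) :
    (∑ z : Fin T → X i, if z τ = xiv
        then pfac N T X A Q1 Qk g i τ z a0 * g i τ a0 z ai else 0)
      = (∏ s ∈ Finset.univ.filter (fun s : Fin T => (τ : ℕ) + 1 ≤ (s : ℕ)),
          (Fintype.card (X i) : ℝ)) *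
        (∑ z : Fin T → X i,
          if ((∀ s : Fin T, (τ : ℕ) + 1 ≤ (s : ℕ) → z s = xd s i) ∧ z τ = xiv)
          then pfac N T X A Q1 Qk g i τ z a0 * g i τ a0 z ai else 0) := by
  have hinv : ∀ (z : Fin T → X i) (s : Fin T) (v : X i),
      s ∈ Finset.univ.filter (fun s : Fin T => (τ : ℕ) + 1 ≤ (s : ℕ)) →
      (if Function.update z s v τ = xiv
        then pfac N T X A Q1 Qk g i τ (Function.update z s v) a0 *
          g i τ a0 (Function.update z s v) ai else 0)
      = if z τ = xiv then pfac N T X A Q1 Qk g i τ z a0 * g i τ a0 z ai else 0 := by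
    intro z s v hs
    rw [Finset.mem_filter] at hs
    have hsτ : τ ≠ s := Fin.ne_of_val_ne (by omega)
    rw [Function.update_of_ne hsτ,
      pfac_congr N T X A Q1 Qk g hc i τ a0
        (fun t ht => Function.update_of_ne (Fin.ne_of_val_ne (by omega : (t : ℕ) ≠ (s : ℕ))) v z),
      congrFun (hc i τ a0 a0 (Function.update z s v) z (fun _ _ => rfl)
        (fun t ht => Function.update_of_ne (Fin.ne_of_val_ne (by omega : (t : ℕ) ≠ (s : ℕ))) v z)) ai]
  have := sum_unpin (β := fun _ : Fin T => X i)
    (Finset.univ.filter (fun s : Fin T => (τ : ℕ) + 1 ≤ (s : ℕ))) (fun s => xd s i)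
    (fun z => if z τ = xiv then pfac N T X A Q1 Qk g i τ z a0 * g i τ a0 z ai else 0)
    hinv
  rw [this]
  congr 1
  apply Finset.sum_congr rfl
  intro z _
  by_cases h1 : ∀ s ∈ Finset.univ.filter (fun s : Fin T => (τ : ℕ) + 1 ≤ (s : ℕ)), z s = xd s i
  · rw [if_pos h1]
    apply if_congr ?_ rfl rfl
    constructor
    · intro h2; exact ⟨fun s hs => h1 s (Finset.mem_filter.mpr ⟨Finset.mem_univ _, hs⟩), h2⟩
    · intro h2; exact h2.2
  · rw [if_neg h1]
    symm
    apply if_neg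
    rintro ⟨h2, -⟩
    exact h1 (fun s hs => h2 s (by rw [Finset.mem_filter] at hs; exact hs.2))
/-- the structured strategy `s_t^i(a_t^i | a_{1:t-1}, x_t^i)` depends on the
profile `g` only through player `i`'s own strategy `g^i`: it equals the displayed ratio
built solely from player-`i` quantities. -/
theorem structured_strategy_formula
    (g : Strat N T X A) (i : Fin N)
    (hK : StochKer N T X A Q1 Qk)
    (hg : Stochastic N T X A g) (hc : Causal N T X A g)
    (τ : Fin T) (a : Fin T → ∀ j, A j) (xiv : X i) (ai : A i)
    (hpos : 0 < sDen N T X A Q1 Qk g i τ a xiv)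
    (hpos' : 0 < ∑ ai' : A i, ∑ xit : Fin T → X i,
        if xit τ = xiv then pfac N T X A Q1 Qk g i τ xit a * g i τ a xit ai' else 0) :
    sNum N T X A Q1 Qk g i τ a xiv ai / sDen N T X A Q1 Qk g i τ a xiv
      = (∑ xit : Fin T → X i,
          if xit τ = xiv then pfac N T X A Q1 Qk g i τ xit a * g i τ a xit ai else 0) /
        (∑ ai' : A i, ∑ xit : Fin T → X i,
          if xit τ = xiv then pfac N T X A Q1 Qk g i τ xit a * g i τ a xit ai' else 0) := by
  classical
  have hne : sDen N T X A Q1 Qk g i τ a xiv ≠ 0 := ne_of_gt hpos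
  have hXne : Nonempty (Fin T → ∀ j, X j) := by
    by_contra h
    rw [not_nonempty_iff] at h
    exact hne (by unfold sDen; rw [Finset.univ_eq_empty, Finset.sum_empty])
  have hAne : Nonempty (Fin T → ∀ j, A j) := by
    by_contra h
    rw [not_nonempty_iff] at h
    refine hne ?_
    unfold sDen
    apply Finset.sum_eq_zero
    intro x _
    rw [Finset.univ_eq_empty, Finset.sum_empty]
  obtain ⟨xd⟩ := hXne
  obtain ⟨ad⟩ := hAne
  haveI hXi : Nonempty (X i) := ⟨xd τ i⟩
  -- notation
  have hNum : ∀ b : A i, sNum N T X A Q1 Qk g i τ a xiv b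
      = (∑ z : Fin T → X i,
          if ((∀ s : Fin T, (τ : ℕ) + 1 ≤ (s : ℕ) → z s = xd s i) ∧ z τ = xiv)
          then pfac N T X A Q1 Qk g i τ z a * g i τ a z b else 0) *
        (∏ j ∈ Finset.univ.erase i, ∑ z : Fin T → X j,
          if (∀ s : Fin T, (τ : ℕ) + 1 ≤ (s : ℕ) → z s = xd s j)
          then pfac N T X A Q1 Qk g j τ z a else 0) := by
    intro b
    rw [sNum_eq_SsumT N T X A Q1 Qk g i τ a xiv b xd ad,
      SsumT_eq_Ssum_tau N T X A Q1 Qk g hK hg hc i τ a xiv b xd ad,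
      Ssum_tau N T X A Q1 Qk g hK hg hc i τ a xiv b xd ad]
  have hDen : sDen N T X A Q1 Qk g i τ a xiv
      = (∑ b : A i, ∑ z : Fin T → X i,
          if ((∀ s : Fin T, (τ : ℕ) + 1 ≤ (s : ℕ) → z s = xd s i) ∧ z τ = xiv)
          then pfac N T X A Q1 Qk g i τ z a * g i τ a z b else 0) *
        (∏ j ∈ Finset.univ.erase i, ∑ z : Fin T → X j,
          if (∀ s : Fin T, (τ : ℕ) + 1 ≤ (s : ℕ) → z s = xd s j)
          then pfac N T X A Q1 Qk g j τ z a else 0) := by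
    rw [sDen_eq_sum_sNum N T X A Q1 Qk g i τ a xiv,
      Finset.sum_congr rfl (fun b _ => hNum b), ← Finset.sum_mul]
  have hpos2 := hpos
  rw [hDen] at hpos2
  have hprod := ne_of_gt hpos2
  rw [mul_ne_zero_iff] at hprod
  obtain ⟨hSne, hCne⟩ := hprod
  have hKne : (∏ s ∈ Finset.univ.filter (fun s : Fin T => (τ : ℕ) + 1 ≤ (s : ℕ)),
      (Fintype.card (X i) : ℝ)) ≠ 0 :=
    Finset.prod_ne_zero_iff.mpr
      (fun s _ => Nat.cast_ne_zero.mpr Fintype.card_ne_zero)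
  rw [hNum ai, hDen,
    Num_unpin N T X A Q1 Qk g hc i τ a xiv ai xd,
    Finset.sum_congr rfl (fun b (_ : b ∈ Finset.univ) =>
      Num_unpin N T X A Q1 Qk g hc i τ a xiv b xd),
    ← Finset.mul_sum]
  rw [mul_div_mul_right _ _ hCne, mul_div_mul_left _ _ hKne]

end DynGame
end
end
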